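/- arXiv:1508.00136 — 8 statements merged into one kernel-verified Lean document; each statement's English description precedes it below -/
import Mathlib

section
/- For every real number β with 0 < β ≤ 1 there exists a constant c_β > 0 such that the following holds for every dimension d ≥ 1 and every real number α with 0 < α < 1: every [-1,-β] ∪ {α}-spherical code in R^d has at most c_β · d elements. -/
open scoped RealInnerProductSpace

open Finset

set_option linter.unusedSectionVars false

section Auxiliary

variable {F : Type*} [NormedAddCommGroup F] [InnerProductSpace ℝ F]

lemma inner_sum_sum (W : Finset F) :
    ⟪∑ w ∈ W, w, ∑ w ∈ W, w⟫ = ∑ w ∈ W, ∑ w' ∈ W, ⟪w, w'⟫ := by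
  rw [sum_inner]
  exact Finset.sum_congr rfl fun w _ => inner_sum _ _ _

lemma gram_sum_le [DecidableEq F] (W : Finset F) (a : ℝ) (h1 : ∀ w ∈ W, ‖w‖ = 1)
    (h2 : ∀ v ∈ W, ∀ w ∈ W, v ≠ w → ⟪v, w⟫ ≤ a) :
    ⟪∑ w ∈ W, w, ∑ w ∈ W, w⟫ ≤ (W.card : ℝ) + a * ((W.card : ℝ)^2 - W.card) := by
  rw [inner_sum_sum]
  have key : ∀ w ∈ W, ∑ w' ∈ W, ⟪w, w'⟫ ≤ 1 + a * ((W.card : ℝ) - 1) := by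
    intro w hw
    rw [← Finset.sum_erase_add _ _ hw]
    have h3 : ∑ w' ∈ W.erase w, ⟪w, w'⟫ ≤ ((W.erase w).card) • a :=
      Finset.sum_le_card_nsmul _ _ a fun x hx =>
        h2 w hw x (Finset.mem_of_mem_erase hx) (Finset.ne_of_mem_erase hx).symm
    have h4 : ⟪w, w⟫ = 1 := by
      rw [real_inner_self_eq_norm_sq, h1 w hw]; norm_num
    rw [Finset.card_erase_of_mem hw] at h3
    have hcard : (1:ℕ) ≤ W.card := Finset.card_pos.2 ⟨w, hw⟩
    rw [nsmul_eq_mul, Nat.cast_sub hcard] at h3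
    push_cast at h3 ⊢
    linarith
  calc ∑ w ∈ W, ∑ w' ∈ W, ⟪w, w'⟫ ≤ ∑ _w ∈ W, (1 + a * ((W.card : ℝ) - 1)) :=
        Finset.sum_le_sum key
    _ = (W.card : ℝ) * (1 + a * ((W.card : ℝ) - 1)) := by
        rw [Finset.sum_const, nsmul_eq_mul]
    _ = (W.card : ℝ) + a * ((W.card : ℝ)^2 - W.card) := by ring

lemma neg_clique_bound {β : ℝ} (hβ : 0 < β) (S : Finset F) (h1 : ∀ w ∈ S, ‖w‖ = 1)
    (h2 : ∀ v ∈ S, ∀ w ∈ S, v ≠ w → ⟪v, w⟫ ≤ -β) :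
    (S.card : ℝ) ≤ 1 + 1/β := by
  classical
  have h0 : (0:ℝ) ≤ ⟪∑ w ∈ S, w, ∑ w ∈ S, w⟫ := real_inner_self_nonneg
  have h3 := gram_sum_le S (-β) h1 h2
  set m : ℝ := (S.card : ℝ) with hm
  have hm0 : 0 ≤ m := Nat.cast_nonneg _
  have key : β * m ≤ β + 1 := by nlinarith [sq_nonneg m, sq_nonneg (m-1)]
  rw [← sub_nonneg]
  have : 1 + 1/β - m = (β + 1 - β * m)/β := by field_simp
  rw [this]
  exact div_nonneg (by linarith) hβ.le

lemma neg_deg_bound {β a : ℝ} (hβ : 0 < β) (ha0 : 0 ≤ a) (ha : a ≤ β^2/2) (v : F) (W : Finset F)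
    (hv : ‖v‖ = 1) (h1 : ∀ w ∈ W, ‖w‖ = 1)
    (hneg : ∀ w ∈ W, ⟪v, w⟫ ≤ -β)
    (h2 : ∀ x ∈ W, ∀ w ∈ W, x ≠ w → ⟪x, w⟫ ≤ a) :
    (W.card : ℝ) ≤ 2/β^2 := by
  classical
  set m : ℝ := (W.card : ℝ) with hm
  have hm0 : 0 ≤ m := Nat.cast_nonneg _
  have hsum : ⟪v, ∑ w ∈ W, w⟫ ≤ -β * m := by
    rw [inner_sum]
    calc ∑ w ∈ W, ⟪v, w⟫ ≤ W.card • (-β) := Finset.sum_le_card_nsmul _ _ _ fun x hx => hneg x hx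
      _ = -β * m := by rw [nsmul_eq_mul]; ring
  have hCS := real_inner_mul_inner_self_le v (∑ w ∈ W, w)
  have hvv : ⟪v, v⟫ = 1 := by rw [real_inner_self_eq_norm_sq, hv]; norm_num
  rw [hvv, one_mul] at hCS
  have h3 := gram_sum_le W a h1 h2
  have hx : β * m ≤ -⟪v, ∑ w ∈ W, w⟫ := by linarith
  have hsq : (β * m)^2 ≤ ⟪v, ∑ w ∈ W, w⟫ * ⟪v, ∑ w ∈ W, w⟫ := by
    nlinarith [mul_self_le_mul_self (by positivity : (0:ℝ) ≤ β*m) hx]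
  have key : β^2 * m^2 ≤ m + (β^2/2) * m^2 := by nlinarith
  have key2 : β^2 * m ≤ 2 := by nlinarith [sq_nonneg (β*m)]
  rw [← sub_nonneg]
  have : 2/β^2 - m = (2 - β^2 * m)/β^2 := by field_simp
  rw [this]; exact div_nonneg (by linarith) (by positivity)

lemma alpha_clique_card_le [FiniteDimensional ℝ F] {a : ℝ} (ha0 : 0 < a) (ha1 : a < 1)
    (W : Finset F) (h1 : ∀ w ∈ W, ‖w‖ = 1)
    (h2 : ∀ v ∈ W, ∀ w ∈ W, v ≠ w → ⟪v, w⟫ = a) :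
    W.card ≤ Module.finrank ℝ F := by
  classical
  apply LinearIndependent.finset_card_le_finrank
  rw [linearIndependent_iff']
  intro s g hsum i hi
  have key : (0:ℝ) = ∑ x ∈ s, ∑ y ∈ s, g x * g y * ⟪(x:F), (y:F)⟫ := by
    have : ⟪∑ x ∈ s, g x • (x:F), ∑ y ∈ s, g y • (y:F)⟫ = (0:ℝ) := by
      rw [hsum, inner_zero_right]
    rw [← this, sum_inner]
    refine Finset.sum_congr rfl fun x _ => ?_
    rw [inner_sum]
    refine Finset.sum_congr rfl fun y _ => ?_
    rw [real_inner_smul_left, real_inner_smul_right]; ring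
  have split : ∀ x ∈ s, ∑ y ∈ s, g x * g y * ⟪(x:F), (y:F)⟫
      = g x ^ 2 + a * ∑ y ∈ s.erase x, g x * g y := by
    intro x hx
    rw [← Finset.sum_erase_add _ _ hx]
    have hxx : ⟪(x:F), (x:F)⟫ = 1 := by
      rw [real_inner_self_eq_norm_sq, h1 x x.2]; norm_num
    rw [hxx, Finset.mul_sum]
    have : ∀ y ∈ s.erase x, g x * g y * ⟪(x:F), (y:F)⟫ = a * (g x * g y) := by
      intro y hy
      have hne : (x:F) ≠ (y:F) := by
        intro h
        exact (Finset.ne_of_mem_erase hy) (Subtype.ext h.symm)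
      rw [h2 x x.2 y y.2 hne]; ring
    rw [Finset.sum_congr rfl this]; ring
  have key2 : (0:ℝ) = ∑ x ∈ s, g x ^ 2 + a * ∑ x ∈ s, ∑ y ∈ s.erase x, g x * g y := by
    rw [key, Finset.sum_congr rfl split, Finset.sum_add_distrib, Finset.mul_sum]
  have sqid : (∑ x ∈ s, g x)^2 = ∑ x ∈ s, g x ^ 2 + ∑ x ∈ s, ∑ y ∈ s.erase x, g x * g y := by
    rw [sq, Finset.sum_mul_sum]
    rw [← Finset.sum_add_distrib]
    refine Finset.sum_congr rfl fun x hx => ?_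
    rw [← Finset.sum_erase_add _ _ hx, sq]
    ring_nf
  have hzero : ∑ x ∈ s, g x ^ 2 ≤ 0 := by nlinarith [sq_nonneg (∑ x ∈ s, g x), Finset.sum_nonneg (fun x (_ : x ∈ s) => sq_nonneg (g x))]
  have heach := (Finset.sum_eq_zero_iff_of_nonneg (fun x (_ : x ∈ s) => sq_nonneg (g x))).1
    (le_antisymm hzero (Finset.sum_nonneg (fun x _ => sq_nonneg (g x))))
  have := heach i hi
  exact pow_eq_zero_iff (by norm_num) |>.1 this


end Auxiliary

lemma base_case {β : ℝ} (hβ : 0 < β) {d : ℕ} {α : ℝ} (hα0 : 0 < α) (hα1 : α < 1)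
    (hsmall : α ≤ β^2/2) (P : Finset (EuclideanSpace ℝ (Fin d)))
    (hunit : ∀ v ∈ P, ‖v‖ = 1)
    (hcode : ∀ v ∈ P, ∀ w ∈ P, v ≠ w → ⟪v, w⟫ ∈ Set.Icc (-1:ℝ) (-β) ∪ {α}) :
    (P.card : ℝ) ≤ (1 + 2/β^2) * d := by
  classical
  obtain ⟨I, hImem, hImax⟩ := Finset.exists_max_image
    (P.powerset.filter (fun T => ∀ v ∈ T, ∀ w ∈ T, v ≠ w → ⟪v, w⟫ = α)) Finset.card
    ⟨∅, by simp⟩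
  rw [Finset.mem_filter, Finset.mem_powerset] at hImem
  obtain ⟨hIP, hIgood⟩ := hImem
  -- every vertex outside I has a negative neighbour in I
  have cover : ∀ v ∈ P, v ∉ I → ∃ t ∈ I, v ≠ t ∧ ⟪v, t⟫ ≤ -β := by
    intro v hv hvI
    have hng : ¬ (∀ x ∈ insert v I, ∀ w ∈ insert v I, x ≠ w → ⟪x, w⟫ = α) := by
      intro hg
      have hmem : insert v I ∈ P.powerset.filter
          (fun T => ∀ x ∈ T, ∀ w ∈ T, x ≠ w → ⟪x, w⟫ = α) := by
        rw [Finset.mem_filter, Finset.mem_powerset]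
        exact ⟨Finset.insert_subset hv hIP, hg⟩
      have := hImax _ hmem
      rw [Finset.card_insert_of_notMem hvI] at this
      omega
    push_neg at hng
    obtain ⟨x, hx, y, hy, hxy, hne⟩ := hng
    have getIcc : ∀ z ∈ I, v ≠ z → ⟪v, z⟫ ≠ α → ⟪v, z⟫ ≤ -β := by
      intro z hz hvz hnz
      rcases hcode v hv z (hIP hz) hvz with h | h
      · exact h.2
      · exact absurd h hnz
    rcases Finset.mem_insert.1 hx with rfl | hxI
    · rcases Finset.mem_insert.1 hy with rfl | hyI
      · exact absurd rfl hxy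
      · exact ⟨y, hyI, hxy, getIcc y hyI hxy hne⟩
    · rcases Finset.mem_insert.1 hy with rfl | hyI
      · refine ⟨x, hxI, hxy.symm, getIcc x hxI hxy.symm ?_⟩
        rw [real_inner_comm]; exact hne
      · exact absurd (hIgood x hxI y hyI hxy) hne
  set f : EuclideanSpace ℝ (Fin d) → Finset (EuclideanSpace ℝ (Fin d)) :=
    fun t => P.filter fun v => v ≠ t ∧ ⟪v, t⟫ ≤ -β with hf
  have hsub : P ⊆ I ∪ I.biUnion f := by
    intro v hv
    rw [Finset.mem_union]
    by_cases hvI : v ∈ I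
    · exact Or.inl hvI
    · obtain ⟨t, ht, hvt, hneg⟩ := cover v hv hvI
      exact Or.inr (Finset.mem_biUnion.2 ⟨t, ht, Finset.mem_filter.2 ⟨hv, hvt, hneg⟩⟩)
  have hcardnat : P.card ≤ I.card + ∑ t ∈ I, (f t).card := by
    calc P.card ≤ (I ∪ I.biUnion f).card := Finset.card_le_card hsub
      _ ≤ I.card + (I.biUnion f).card := Finset.card_union_le _ _
      _ ≤ I.card + ∑ t ∈ I, (f t).card := by
          exact Nat.add_le_add_left (Finset.card_biUnion_le) _
  have hftcard : ∀ t ∈ I, ((f t).card : ℝ) ≤ 2/β^2 := by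
    intro t ht
    refine neg_deg_bound hβ hα0.le hsmall t (f t) (hunit t (hIP ht))
      (fun w hw => hunit w (Finset.mem_filter.1 hw).1) ?_ ?_
    · intro w hw
      obtain ⟨hwP, hwt, hneg⟩ := Finset.mem_filter.1 hw
      rw [real_inner_comm]; exact hneg
    · intro x hx w hw hxw
      obtain ⟨hxP, -⟩ := Finset.mem_filter.1 hx
      obtain ⟨hwP, -⟩ := Finset.mem_filter.1 hw
      rcases hcode x hxP w hwP hxw with h | h
      · have := h.2; linarith [hα0]
      · rw [Set.mem_singleton_iff] at h; rw [h]
  have hIcard : (I.card : ℝ) ≤ d := by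
    have := alpha_clique_card_le hα0 hα1 I (fun w hw => hunit w (hIP hw)) hIgood
    rw [finrank_euclideanSpace_fin] at this
    exact_mod_cast this
  have hsumR : ((∑ t ∈ I, (f t).card : ℕ) : ℝ) ≤ (I.card : ℝ) * (2/β^2) := by
    push_cast
    calc ∑ t ∈ I, ((f t).card : ℝ) ≤ ∑ _t ∈ I, (2/β^2 : ℝ) := Finset.sum_le_sum hftcard
      _ = (I.card : ℝ) * (2/β^2) := by rw [Finset.sum_const, nsmul_eq_mul]
  have hP : (P.card : ℝ) ≤ (I.card : ℝ) + (I.card : ℝ) * (2/β^2) := by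
    have := hcardnat
    have hcast : (P.card : ℝ) ≤ (I.card : ℝ) + ((∑ t ∈ I, (f t).card : ℕ) : ℝ) := by
      exact_mod_cast this
    linarith
  have h2b : (0:ℝ) ≤ 2/β^2 := by positivity
  nlinarith [hP, mul_le_mul_of_nonneg_right hIcard h2b]

lemma aux_rec {β : ℝ} (hβ0 : 0 < β) (k : ℕ) :
    ∃ c : ℝ, 0 < c ∧ ∀ d : ℕ, 1 ≤ d → ∀ α : ℝ, 0 < α → α < 1 → 2/β^2 ≤ 1/α + k →
      ∀ P : Finset (EuclideanSpace ℝ (Fin d)),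
        (∀ v ∈ P, ‖v‖ = 1) →
        (∀ v ∈ P, ∀ w ∈ P, v ≠ w → ⟪v, w⟫ ∈ Set.Icc (-1 : ℝ) (-β) ∪ {α}) →
        (P.card : ℝ) ≤ c * d := by
  induction k with
  | zero =>
    refine ⟨1 + 2/β^2, by positivity, ?_⟩
    intro d hd α hα0 hα1 hcond P hunit hcode
    have h2 : 2/β^2 ≤ 1/α := by simpa using hcond
    have hsmall : α ≤ β^2/2 := by
      rw [div_le_div_iff₀ (by positivity) hα0] at h2
      rw [le_div_iff₀ (by norm_num : (0:ℝ) < 2)]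
      linarith
    exact base_case hβ0 hα0 hα1 hsmall P hunit hcode
  | succ k IH =>
    obtain ⟨c, hc, hI⟩ := IH
    refine ⟨(1 + 1/β) * (1 + c) + (1 + 2/β^2), by positivity, ?_⟩
    intro d hd α hα0 hα1 hcond P hunit hcode
    have hd1 : (1:ℝ) ≤ d := by exact_mod_cast hd
    by_cases hsm : α ≤ β^2/2
    · have hb := base_case hβ0 hα0 hα1 hsm P hunit hcode
      have hpos : (0:ℝ) ≤ (1 + 1/β) * (1 + c) := by positivity
      nlinarith
    · classical
      obtain ⟨S, hSmem, hSmax⟩ := Finset.exists_max_image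
        (P.powerset.filter (fun T => ∀ v ∈ T, ∀ w ∈ T, v ≠ w → ⟪v, w⟫ ≤ -β)) Finset.card
        ⟨∅, by simp⟩
      rw [Finset.mem_filter, Finset.mem_powerset] at hSmem
      obtain ⟨hSP, hSneg⟩ := hSmem
      have cover : ∀ v ∈ P, v ∉ S → ∃ s ∈ S, v ≠ s ∧ ⟪v, s⟫ = α := by
        intro v hv hvS
        have hng : ¬ (∀ x ∈ insert v S, ∀ w ∈ insert v S, x ≠ w → ⟪x, w⟫ ≤ -β) := by
          intro hg
          have hmem : insert v S ∈ P.powerset.filter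
              (fun T => ∀ x ∈ T, ∀ w ∈ T, x ≠ w → ⟪x, w⟫ ≤ -β) := by
            rw [Finset.mem_filter, Finset.mem_powerset]
            exact ⟨Finset.insert_subset hv hSP, hg⟩
          have := hSmax _ hmem
          rw [Finset.card_insert_of_notMem hvS] at this
          omega
        push_neg at hng
        obtain ⟨x, hx, y, hy, hxy, hne⟩ := hng
        have getα : ∀ z ∈ S, v ≠ z → -β < ⟪v, z⟫ → ⟪v, z⟫ = α := by
          intro z hz hvz hnz
          rcases hcode v hv z (hSP hz) hvz with h | h
          · exact absurd h.2 (not_le.2 hnz)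
          · exact h
        rcases Finset.mem_insert.1 hx with rfl | hxS
        · rcases Finset.mem_insert.1 hy with rfl | hyS
          · exact absurd rfl hxy
          · exact ⟨y, hyS, hxy, getα y hyS hxy hne⟩
        · rcases Finset.mem_insert.1 hy with rfl | hyS
          · refine ⟨x, hxS, hxy.symm, getα x hxS hxy.symm ?_⟩
            rw [real_inner_comm]; exact hne
          · exact absurd (hSneg x hxS y hyS hxy) (not_le.2 hne)
      set g : EuclideanSpace ℝ (Fin d) → Finset (EuclideanSpace ℝ (Fin d)) :=
        fun s => P.filter fun v => v ≠ s ∧ ⟪v, s⟫ = α with hg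
      have hsub : P ⊆ S ∪ S.biUnion g := by
        intro v hv
        rw [Finset.mem_union]
        by_cases hvS : v ∈ S
        · exact Or.inl hvS
        · obtain ⟨s, hs, hvs, hα⟩ := cover v hv hvS
          exact Or.inr (Finset.mem_biUnion.2 ⟨s, hs, Finset.mem_filter.2 ⟨hv, hvs, hα⟩⟩)
      -- projection bound for each class
      have h1α : (0:ℝ) < 1 - α^2 := by nlinarith
      have hsq : Real.sqrt (1 - α^2) > 0 := Real.sqrt_pos.2 h1α
      have hclass : ∀ s ∈ S, ((g s).card : ℝ) ≤ c * d := by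
        intro s hs
        have hsP : s ∈ P := hSP hs
        have hsu : ‖s‖ = 1 := hunit s hsP
        set c₀ : ℝ := (Real.sqrt (1 - α^2))⁻¹ with hc₀
        have hc₀pos : 0 < c₀ := by positivity
        set Fm : EuclideanSpace ℝ (Fin d) → EuclideanSpace ℝ (Fin d) :=
          fun v => c₀ • (v - α • s) with hFm
        have hinj : Function.Injective Fm := by
          intro a b hab
          have h1 : a - α • s = b - α • s := smul_right_injective _ hc₀pos.ne' hab
          exact sub_left_injective h1
        set Q : Finset (EuclideanSpace ℝ (Fin d)) := (g s).image Fm with hQ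
        have hcardQ : Q.card = (g s).card := Finset.card_image_of_injective _ hinj
        have hmemgs : ∀ v ∈ g s, v ∈ P ∧ v ≠ s ∧ ⟪v, s⟫ = α := by
          intro v hv
          exact Finset.mem_filter.1 hv
        -- norms
        have hnorm : ∀ v ∈ g s, ‖Fm v‖ = 1 := by
          intro v hv
          obtain ⟨hvP, hvs, hvsα⟩ := hmemgs v hv
          have hvu : ‖v‖ = 1 := hunit v hvP
          have hsub2 : ‖v - α • s‖^2 = 1 - α^2 := by
            rw [norm_sub_sq_real, real_inner_smul_right, hvsα, norm_smul, hsu, hvu]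
            simp only [Real.norm_eq_abs, mul_one, mul_pow, sq_abs, one_pow]
            ring
          have hns : ‖v - α • s‖ = Real.sqrt (1 - α^2) := by
            rw [← hsub2, Real.sqrt_sq (norm_nonneg _)]
          rw [hFm, norm_smul, Real.norm_eq_abs, abs_of_pos hc₀pos, hns, hc₀]
          exact inv_mul_cancel₀ hsq.ne'
        -- inner products
        have hinner : ∀ v ∈ g s, ∀ w ∈ g s, ⟪Fm v, Fm w⟫ = (⟪v, w⟫ - α^2) / (1 - α^2) := by
          intro v hv w hw
          obtain ⟨hvP, hvs, hvsα⟩ := hmemgs v hv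
          obtain ⟨hwP, hws, hwsα⟩ := hmemgs w hw
          have hswα : ⟪s, w⟫ = α := by rw [real_inner_comm]; exact hwsα
          have hss : ⟪s, s⟫ = (1:ℝ) := by
            rw [real_inner_self_eq_norm_sq, hsu]; norm_num
          have hcc : c₀ * c₀ = (1 - α^2)⁻¹ := by
            rw [hc₀, ← mul_inv, Real.mul_self_sqrt h1α.le]
          have expand : ⟪v - α • s, w - α • s⟫ = ⟪v, w⟫ - α^2 := by
            simp only [inner_sub_left, inner_sub_right, real_inner_smul_left,
              real_inner_smul_right, hvsα, hswα, hss]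
            ring
          show ⟪c₀ • (v - α • s), c₀ • (w - α • s)⟫ = _
          rw [real_inner_smul_left, real_inner_smul_right, expand, ← mul_assoc, hcc,
            inv_mul_eq_div]
        set α' : ℝ := α / (1 + α) with hα'
        have hα'0 : 0 < α' := by positivity
        have hα'1 : α' < 1 := by
          rw [hα', div_lt_one (by linarith)]; linarith
        have hα'inv : 1/α' = 1/α + 1 := by
          rw [hα']; field_simp
        have hcond' : 2/β^2 ≤ 1/α' + k := by
          push_cast at hcond
          rw [hα'inv]; linarith
        have hQunit : ∀ u ∈ Q, ‖u‖ = 1 := by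
          intro u hu
          obtain ⟨v, hv, rfl⟩ := Finset.mem_image.1 hu
          exact hnorm v hv
        have hQcode : ∀ u ∈ Q, ∀ u' ∈ Q, u ≠ u' →
            ⟪u, u'⟫ ∈ Set.Icc (-1 : ℝ) (-β) ∪ {α'} := by
          intro u hu u' hu' huu
          obtain ⟨v, hv, rfl⟩ := Finset.mem_image.1 hu
          obtain ⟨w, hw, rfl⟩ := Finset.mem_image.1 hu'
          have hvw : v ≠ w := fun h => huu (by rw [h])
          obtain ⟨hvP, -, -⟩ := hmemgs v hv
          obtain ⟨hwP, -, -⟩ := hmemgs w hw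
          rw [hinner v hv w hw]
          rcases hcode v hvP w hwP hvw with h | h
          · left
            constructor
            · -- ≥ -1 via Cauchy-Schwarz on image vectors
              have hCS := abs_real_inner_le_norm (Fm v) (Fm w)
              rw [hnorm v hv, hnorm w hw, one_mul, hinner v hv w hw] at hCS
              exact (abs_le.1 hCS).1
            · rw [div_le_iff₀ h1α]
              have hw2 := h.2
              nlinarith [h.1, sq_nonneg α]
          · right
            rw [Set.mem_singleton_iff] at h ⊢
            rw [h, hα']
            rw [div_eq_div_iff h1α.ne' (by positivity : ((1:ℝ) + α) ≠ 0)]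
            ring
        have hQbound := hI d hd α' hα'0 hα'1 hcond' Q hQunit hQcode
        rw [hcardQ] at hQbound
        exact hQbound
      -- combine
      have hScard : (S.card : ℝ) ≤ 1 + 1/β :=
        neg_clique_bound hβ0 S (fun w hw => hunit w (hSP hw)) hSneg
      have hcardnat : P.card ≤ S.card + ∑ s ∈ S, (g s).card := by
        calc P.card ≤ (S ∪ S.biUnion g).card := Finset.card_le_card hsub
          _ ≤ S.card + (S.biUnion g).card := Finset.card_union_le _ _
          _ ≤ S.card + ∑ s ∈ S, (g s).card := Nat.add_le_add_left Finset.card_biUnion_le _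
      have hsumR : ((∑ s ∈ S, (g s).card : ℕ) : ℝ) ≤ (S.card : ℝ) * (c * d) := by
        push_cast
        calc ∑ s ∈ S, ((g s).card : ℝ) ≤ ∑ _s ∈ S, (c * d) := Finset.sum_le_sum hclass
          _ = (S.card : ℝ) * (c * d) := by rw [Finset.sum_const, nsmul_eq_mul]
      have hP : (P.card : ℝ) ≤ (S.card : ℝ) + (S.card : ℝ) * (c * d) := by
        have hcast : (P.card : ℝ) ≤ (S.card : ℝ) + ((∑ s ∈ S, (g s).card : ℕ) : ℝ) := by
          exact_mod_cast hcardnat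
        linarith
      have hq : (0:ℝ) ≤ 1 + 1/β := by positivity
      have hbase : (0:ℝ) ≤ 1 + 2/β^2 := by positivity
      have hSnn : (0:ℝ) ≤ (S.card : ℝ) := Nat.cast_nonneg _
      nlinarith [mul_le_mul_of_nonneg_right hScard (by positivity : (0:ℝ) ≤ 1 + c * d),
        mul_le_mul_of_nonneg_left hd1 (by positivity : (0:ℝ) ≤ (1 + 1/β) * c),
        mul_le_mul_of_nonneg_right hd1 hbase]

/-- **Theorem 1 (main theorem).** For every `0 < β ≤ 1` there is a constant `c_β > 0` such
that for every dimension `d ≥ 1` and every `0 < α < 1`, any `[-1,-β] ∪ {α}`-spherical code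
in `ℝ^d` (a finite set of unit vectors whose pairwise inner products lie in
`[-1,-β] ∪ {α}`) has at most `c_β · d` elements. -/
theorem spherical_code_linear_bound (β : ℝ) (hβ0 : 0 < β) (hβ1 : β ≤ 1) :
    ∃ c : ℝ, 0 < c ∧ ∀ d : ℕ, 1 ≤ d → ∀ α : ℝ, 0 < α → α < 1 →
      ∀ P : Finset (EuclideanSpace ℝ (Fin d)),
        (∀ v ∈ P, ‖v‖ = 1) →
        (∀ v ∈ P, ∀ w ∈ P, v ≠ w → ⟪v, w⟫ ∈ Set.Icc (-1 : ℝ) (-β) ∪ {α}) →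
        (P.card : ℝ) ≤ c * d := by
  obtain ⟨c, hc, h⟩ := aux_rec hβ0 ⌈2/β^2⌉₊
  refine ⟨c, hc, ?_⟩
  intro d hd α hα0 hα1 P hunit hcode
  refine h d hd α hα0 hα1 ?_ P hunit hcode
  have h1 : 2/β^2 ≤ (⌈2/β^2⌉₊ : ℕ) := Nat.le_ceil _
  have h2 : 0 < 1/α := by positivity
  linarith
end

section
/- For every real number α with 0 < α < 1 there exists a constant c_α > 0 such that for every dimension d ≥ 1, every set of unit vectors in R^d in which the inner product of any two distinct vectors belongs to {-α, α} has at most c_α · d elements. Equivalently, the number of equiangular lines in R^d with common angle arccos α is at most c_α · d. -/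
open scoped RealInnerProductSpace
open Finset

set_option maxHeartbeats 1000000

section Aux

variable {d : ℕ}

local notation "E" => EuclideanSpace ℝ (Fin d)

/-- Greedy independent set in a bounded-degree graph. -/
lemma greedy_indep {β : Type*} [DecidableEq β] (p : β → β → Prop) [DecidableRel p]
    (hsymm : ∀ x y, p x y → p y x) (Δ : ℕ) :
    ∀ n (W : Finset β), W.card ≤ n →
      (∀ u ∈ W, ((W.filter fun y => y ≠ u ∧ p u y).card ≤ Δ)) →
      ∃ S ⊆ W, (∀ x ∈ S, ∀ y ∈ S, x ≠ y → ¬ p x y) ∧ W.card ≤ (Δ + 1) * S.card := by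
  intro n
  induction n with
  | zero =>
    intro W hW _
    refine ⟨∅, empty_subset _, by simp, ?_⟩
    simpa using hW
  | succ n ih =>
    intro W hW hdeg
    rcases W.eq_empty_or_nonempty with rfl | ⟨u, hu⟩
    · exact ⟨∅, empty_subset _, by simp, by simp⟩
    · set B := W.filter (fun y => y ≠ u ∧ p u y) with hB
      set W' := (W.erase u) \ B with hW'
      have hW'sub : W' ⊆ W := (sdiff_subset).trans (erase_subset _ _)
      have hW'card : W'.card ≤ n := by
        have h1 : W'.card ≤ (W.erase u).card := card_le_card sdiff_subset
        have h2 : (W.erase u).card + 1 = W.card := card_erase_add_one hu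
        omega
      have hdeg' : ∀ v ∈ W', ((W'.filter fun y => y ≠ v ∧ p v y).card ≤ Δ) := by
        intro v hv
        refine le_trans (card_le_card ?_) (hdeg v (hW'sub hv))
        exact filter_subset_filter _ hW'sub
      obtain ⟨S', hS'sub, hS'ind, hS'card⟩ := ih W' hW'card hdeg'
      have huS' : u ∉ S' := fun h =>
        (mem_erase.mp (mem_sdiff.mp (hS'sub h)).1).1 rfl
      refine ⟨insert u S', insert_subset hu (hS'sub.trans hW'sub), ?_, ?_⟩
      · intro x hx y hy hxy
        rcases mem_insert.mp hx with rfl | hx'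
        · rcases mem_insert.mp hy with rfl | hy'
          · exact absurd rfl hxy
          · intro hp
            have : y ∈ B := mem_filter.mpr ⟨hS'sub hy' |> hW'sub, (mem_erase.mp (mem_sdiff.mp (hS'sub hy')).1).1, hp⟩
            exact (mem_sdiff.mp (hS'sub hy')).2 this
        · rcases mem_insert.mp hy with rfl | hy'
          · intro hp
            have : x ∈ B := mem_filter.mpr ⟨hS'sub hx' |> hW'sub, (mem_erase.mp (mem_sdiff.mp (hS'sub hx')).1).1, hsymm _ _ hp⟩
            exact (mem_sdiff.mp (hS'sub hx')).2 this
          · exact hS'ind x hx' y hy' hxy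
      · have hBcard : B.card ≤ Δ := hdeg u hu
        have hcover : W ⊆ insert u (W' ∪ B) := by
          intro w hw
          by_cases hwu : w = u
          · simp [hwu]
          · rcases Classical.em (w ∈ B) with hwB | hwB
            · simp [hwB]
            · have : w ∈ W' := mem_sdiff.mpr ⟨mem_erase.mpr ⟨hwu, hw⟩, hwB⟩
              simp [this]
        have h1 : W.card ≤ 1 + (W'.card + B.card) :=
          le_trans (card_le_card hcover) (le_trans (card_insert_le _ _) (by
            have := card_union_le W' B; omega))
        have h2 : (insert u S').card = S'.card + 1 := card_insert_of_notMem huS'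
        calc W.card ≤ 1 + (W'.card + B.card) := h1
          _ ≤ 1 + ((Δ + 1) * S'.card + Δ) := by omega
          _ = (Δ + 1) * (S'.card + 1) := by ring
          _ = (Δ + 1) * (insert u S').card := by rw [h2]

/-- If a family of vectors has norms² ≤ N and pairwise inner products ≤ -β, then
the cardinality is bounded. -/
lemma neg_inner_bound {ι : Type*} (F : Finset ι) (f : ι → E) (N β : ℝ)
    (hn : ∀ i ∈ F, ⟪f i, f i⟫ ≤ N)
    (hp : ∀ i ∈ F, ∀ j ∈ F, i ≠ j → ⟪f i, f j⟫ ≤ -β) :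
    0 ≤ (F.card : ℝ) * N - (F.card : ℝ) * ((F.card : ℝ) - 1) * β := by
  classical
  rcases F.eq_empty_or_nonempty with rfl | hne
  · simp
  have h0 : (0:ℝ) ≤ ⟪∑ i ∈ F, f i, ∑ i ∈ F, f i⟫ := real_inner_self_nonneg
  have hexp : ⟪∑ i ∈ F, f i, ∑ i ∈ F, f i⟫ = ∑ i ∈ F, ∑ j ∈ F, ⟪f i, f j⟫ := by
    rw [sum_inner]
    exact Finset.sum_congr rfl fun i _ => inner_sum _ _ _
  have hrow : ∀ i ∈ F, ∑ j ∈ F, ⟪f i, f j⟫ ≤ N + ((F.card : ℝ) - 1) * (-β) := by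
    intro i hi
    have hsplit : ∑ j ∈ F, ⟪f i, f j⟫ = ⟪f i, f i⟫ + ∑ j ∈ F.erase i, ⟪f i, f j⟫ :=
      (Finset.add_sum_erase F _ hi).symm
    have hb : ∑ j ∈ F.erase i, ⟪f i, f j⟫ ≤ (F.erase i).card • (-β) :=
      Finset.sum_le_card_nsmul _ _ _ fun j hj =>
        hp i hi j (Finset.mem_of_mem_erase hj) (fun h => (Finset.mem_erase.mp hj).1 h.symm)
    have hc : ((F.erase i).card : ℝ) = (F.card : ℝ) - 1 := by
      have := Finset.card_erase_add_one hi
      have h1 : 1 ≤ F.card := Finset.card_pos.mpr ⟨i, hi⟩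
      push_cast [← this]
      ring
    rw [hsplit]
    have := hn i hi
    rw [nsmul_eq_mul, hc] at hb
    linarith
  have htot : ⟪∑ i ∈ F, f i, ∑ i ∈ F, f i⟫ ≤ (F.card : ℝ) * (N + ((F.card : ℝ) - 1) * (-β)) := by
    rw [hexp]
    calc ∑ i ∈ F, ∑ j ∈ F, ⟪f i, f j⟫ ≤ F.card • (N + ((F.card : ℝ) - 1) * (-β)) :=
      Finset.sum_le_card_nsmul _ _ _ hrow
      _ = (F.card : ℝ) * (N + ((F.card : ℝ) - 1) * (-β)) := nsmul_eq_mul _ _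
  nlinarith [h0]

/-- Vectors with all norms² = N and all pairwise inner products = a < N: at most d+1 of them. -/
lemma card_le_of_equal_inner {N a : ℝ} (ha : a < N) (W : Finset E)
    (hn : ∀ w ∈ W, ⟪w, w⟫ = N)
    (hp : ∀ w ∈ W, ∀ w' ∈ W, w ≠ w' → ⟪w, w'⟫ = a) :
    W.card ≤ d + 1 := by
  classical
  rcases W.eq_empty_or_nonempty with rfl | ⟨w₀, hw₀⟩
  · simp
  set T := W.erase w₀ with hT
  have hTsub : ∀ w : T, (w : E) ∈ W := fun w => Finset.mem_of_mem_erase w.2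
  have hTne : ∀ w : T, (w : E) ≠ w₀ := fun w => (Finset.mem_erase.mp w.2).1
  have hli : LinearIndependent ℝ (fun w : T => (w : E) - w₀) := by
    rw [Fintype.linearIndependent_iff]
    intro g hg
    -- inner products of differences
    have hinner : ∀ i j : T, ⟪(i : E) - w₀, (j : E) - w₀⟫
        = (N - a) + (if i = j then (N - a) else 0) := by
      intro i j
      have h1 : ⟪(i:E), w₀⟫ = a := hp _ (hTsub i) _ hw₀ (hTne i)
      have h2 : ⟪w₀, (j:E)⟫ = a := by
        rw [real_inner_comm]; exact hp _ (hTsub j) _ hw₀ (hTne j)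
      have h3 : ⟪w₀, w₀⟫ = N := hn _ hw₀
      have h2' : ⟪w₀, (i:E)⟫ = a := by rw [real_inner_comm]; exact h1
      by_cases hij : i = j
      · subst hij
        have h4 : ⟪(i:E), (i:E)⟫ = N := hn _ (hTsub i)
        simp only [inner_sub_left, inner_sub_right, h1, h3, h4, h2', if_pos rfl]
        simp only [if_true]
        ring
      · have h4 : ⟪(i:E), (j:E)⟫ = a := by
          refine hp _ (hTsub i) _ (hTsub j) ?_
          intro h; exact hij (Subtype.ext h)
        simp only [inner_sub_left, inner_sub_right, h1, h2, h3, h4, h2', if_neg hij]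
        ring
    -- take inner products with each difference
    have hkey : ∀ j : T, (N - a) * (g j + ∑ i : T, g i) = 0 := by
      intro j
      have h0 : ⟪∑ i : T, g i • ((i : E) - w₀), (j : E) - w₀⟫ = 0 := by rw [hg]; simp
      rw [sum_inner] at h0
      have : ∑ i : T, g i * ((N - a) + (if i = j then (N - a) else 0))
          = (N - a) * (g j + ∑ i : T, g i) := by
        rw [Finset.sum_congr rfl (fun i _ => by ring_nf : ∀ i ∈ Finset.univ, g i * ((N - a) + (if i = j then (N - a) else 0)) = g i * (N-a) + g i * (if i = j then (N - a) else 0))]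
        rw [Finset.sum_add_distrib]
        have hs : ∑ i : T, g i * (if i = j then (N - a) else 0) = g j * (N - a) := by
          rw [Finset.sum_eq_single j]
          · simp
          · intro b _ hb; simp [hb]
          · intro h; exact absurd (Finset.mem_univ j) h
        rw [hs, ← Finset.sum_mul]
        ring
      have h0' : ∑ i : T, g i * ((N - a) + (if i = j then (N - a) else 0)) = 0 := by
        calc ∑ i : T, g i * ((N - a) + (if i = j then (N - a) else 0))
            = ∑ i : T, ⟪g i • ((i : E) - w₀), (j : E) - w₀⟫ :=
              Finset.sum_congr rfl fun i _ => by rw [real_inner_smul_left, hinner i j]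
          _ = 0 := h0
      exact this.symm.trans h0'
    have hNa : N - a ≠ 0 := by linarith
    have hkey2 : ∀ j : T, g j = -(∑ i : T, g i) := by
      intro j
      have := hkey j
      have h := mul_eq_zero.mp this
      rcases h with h | h
      · exact absurd h hNa
      · linarith
    have hsum : (∑ i : T, g i) = 0 := by
      have h1 : (∑ i : T, g i) = (Fintype.card T : ℝ) * (-(∑ i : T, g i)) := by
        conv_lhs => rw [Finset.sum_congr rfl (fun i _ => hkey2 i)]
        rw [Finset.sum_const, Finset.card_univ, nsmul_eq_mul]
      have h2 : (1 + (Fintype.card T : ℝ)) * (∑ i : T, g i) = 0 := by linarith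
      have h3 : (1 + (Fintype.card T : ℝ)) ≠ 0 := by positivity
      exact (mul_eq_zero.mp h2).resolve_left h3
    intro i
    rw [hkey2 i, hsum, neg_zero]
  have hcard : T.card ≤ d := by
    have h1 := hli.fintype_card_le_finrank
    rwa [Fintype.card_coe, finrank_euclideanSpace_fin] at h1
  have h2 : T.card + 1 = W.card := Finset.card_erase_add_one hw₀
  omega

/-- Case 1: when the "positive" value `a` is at most `α²/2`. -/
lemma case1 {α N a : ℝ} (hα0 : 0 < α) (hα1 : α < 1) {Δ : ℕ} (hΔ : 1 + 2/α^2 ≤ (Δ:ℝ))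
    (hN1 : N ≤ 1) (ha : a ≤ α^2/2) (W : Finset E)
    (hn : ∀ w ∈ W, ⟪w, w⟫ = N)
    (hp : ∀ w ∈ W, ∀ w' ∈ W, w ≠ w' → ⟪w, w'⟫ = a ∨ ⟪w, w'⟫ = a - 2*α) :
    W.card ≤ (Δ + 1) * (d + 1) := by
  classical
  set b : ℝ := a - 2*α with hbdef
  have hα2 : (0:ℝ) < α^2 := by positivity
  have hnormprod : ∀ x ∈ W, ∀ y ∈ W, ‖x‖ * ‖y‖ = N := by
    intro x hx y hy
    have hx2 : ‖x‖^2 = N := (real_inner_self_eq_norm_sq x).symm.trans (hn x hx)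
    have hy2 : ‖y‖^2 = N := (real_inner_self_eq_norm_sq y).symm.trans (hn y hy)
    have hNnn : 0 ≤ N := by rw [← hx2]; positivity
    have hx' : ‖x‖ = Real.sqrt N := by rw [← hx2, Real.sqrt_sq (norm_nonneg x)]
    have hy' : ‖y‖ = Real.sqrt N := by rw [← hy2, Real.sqrt_sq (norm_nonneg y)]
    rw [hx', hy', Real.mul_self_sqrt hNnn]
  -- degree bound for the "negative" graph
  have hdeg : ∀ u ∈ W, ((W.filter fun y => y ≠ u ∧ ⟪u, y⟫ = b).card ≤ Δ) := by
    intro u hu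
    set F := W.filter fun y => y ≠ u ∧ ⟪u, y⟫ = b with hF
    rcases F.eq_empty_or_nonempty with hFe | ⟨y₀, hy₀⟩
    · rw [hFe]; simp
    have hmem : ∀ y ∈ F, y ∈ W ∧ y ≠ u ∧ ⟪u, y⟫ = b := fun y hy => by
      have := Finset.mem_filter.mp hy; exact ⟨this.1, this.2.1, this.2.2⟩
    obtain ⟨hy₀W, -, hbval⟩ := hmem y₀ hy₀
    have habs : |⟪u, y₀⟫| ≤ ‖u‖ * ‖y₀‖ := abs_real_inner_le_norm u y₀
    have hprod : ‖u‖ * ‖y₀‖ = N := hnormprod u hu y₀ hy₀W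
    have hbneg : b ≤ -α := by rw [hbdef]; nlinarith
    have hαN : α ≤ N := by
      have h1 := (abs_le.mp habs).1
      rw [hprod, hbval] at h1
      linarith
    have hNpos : 0 < N := lt_of_lt_of_le hα0 hαN
    have hb2 : α^2 ≤ b^2 := by nlinarith
    have hexp : ∀ y ∈ F, ∀ y' ∈ F,
        ⟪y - (b/N) • u, y' - (b/N) • u⟫ = ⟪y, y'⟫ - b^2/N := by
      intro y hy y' hy'
      obtain ⟨hyW, -, hyb⟩ := hmem y hy
      obtain ⟨hy'W, -, hy'b⟩ := hmem y' hy'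
      have h1 : ⟪y, u⟫ = b := by rw [real_inner_comm]; exact hyb
      have h2 : ⟪u, u⟫ = N := hn u hu
      simp only [inner_sub_left, inner_sub_right, real_inner_smul_left, real_inner_smul_right]
      rw [h1, hy'b, h2]
      field_simp
      ring
    have hdivb : b^2/N * N = b^2 := div_mul_cancel₀ _ (ne_of_gt hNpos)
    have hdivα : α^2/(2*N) * (2*N) = α^2 := div_mul_cancel₀ _ (by positivity)
    have hkey := neg_inner_bound (d := d) F (fun y => y - (b/N) • u) N (α^2/(2*N))
      (fun y hy => by
        obtain ⟨hyW, -, -⟩ := hmem y hy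
        rw [hexp y hy y hy, hn y hyW]
        have : (0:ℝ) ≤ b^2/N := by positivity
        linarith)
      (fun y hy y' hy' hne => by
        obtain ⟨hyW, -, -⟩ := hmem y hy
        obtain ⟨hy'W, -, -⟩ := hmem y' hy'
        rw [hexp y hy y' hy']
        have hyy' : ⟪y, y'⟫ ≤ a := by
          rcases hp y hyW y' hy'W hne with h | h <;> rw [h] <;> nlinarith
        -- a - b²/N ≤ -(α²/(2N))
        have hq : (0:ℝ) ≤ α^2/(2*N) := by positivity
        nlinarith [hdivb, hdivα, hq, hNpos, hN1, ha, hb2, hyy'])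
    -- conclude F.card ≤ Δ
    by_contra hcon
    push_neg at hcon
    have hD : (Δ:ℝ) + 1 ≤ (F.card : ℝ) := by exact_mod_cast hcon
    have hΔ0 : (0:ℝ) ≤ (Δ:ℝ) := Nat.cast_nonneg Δ
    set D := (F.card : ℝ) with hDdef
    have hDpos : 0 < D := by linarith
    have h1 : D * ((D - 1) * (α^2/(2*N))) ≤ D * N := by nlinarith [hkey]
    have h2 : (D - 1) * (α^2/(2*N)) ≤ N := le_of_mul_le_mul_left h1 hDpos
    have h3 : (D - 1) * α^2 ≤ N * (2*N) := by
      have := mul_le_mul_of_nonneg_right h2 (le_of_lt (by positivity : (0:ℝ) < 2*N))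
      calc (D - 1) * α^2 = (D - 1) * (α^2/(2*N) * (2*N)) := by rw [hdivα]
        _ = (D - 1) * (α^2/(2*N)) * (2*N) := by ring
        _ ≤ N * (2*N) := this
    have h4 : (2/α^2) * α^2 = 2 := div_mul_cancel₀ _ (ne_of_gt hα2)
    nlinarith [h3, h4, hΔ, hD, hN1, hNpos, hα2]
  -- greedy independent set
  obtain ⟨S, hSsub, hSind, hScard⟩ := greedy_indep (β := E) (fun x y => ⟪x, y⟫ = b)
    (fun x y hxy => by
      show ⟪y, x⟫ = b
      rw [real_inner_comm]; exact hxy) Δ W.card W le_rfl hdeg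
  have hSind' : ∀ x ∈ S, ∀ y ∈ S, x ≠ y → ⟪x, y⟫ = a := by
    intro x hx y hy hxy
    rcases hp x (hSsub hx) y (hSsub hy) hxy with h | h
    · exact h
    · exact absurd h (hSind x hx y hy hxy)
  have hSd : S.card ≤ d + 1 := by
    by_cases hS1 : S.card ≤ 1
    · omega
    · push_neg at hS1
      obtain ⟨x, hx, y, hy, hxy⟩ := Finset.one_lt_card.mp hS1
      have hax : ⟪x, y⟫ = a := hSind' x hx y hy hxy
      have haN : a ≤ N := by
        have habs := abs_real_inner_le_norm x y
        rw [hnormprod x (hSsub hx) y (hSsub hy), hax] at habs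
        exact (abs_le.mp habs).2
      have haNne : a ≠ N := by
        intro h
        apply hxy
        have hz : ⟪x - y, x - y⟫ = (0:ℝ) := by
          have h1 : ⟪x, y⟫ = a := hax
          have h2 : ⟪y, x⟫ = a := by rw [real_inner_comm]; exact hax
          simp only [inner_sub_left, inner_sub_right]
          rw [h1, h2, hn x (hSsub hx), hn y (hSsub hy), h]
          ring
        have := inner_self_eq_zero.mp hz
        exact sub_eq_zero.mp this
      exact card_le_of_equal_inner (lt_of_le_of_ne haN haNne) S
        (fun w hw => hn w (hSsub hw)) hSind'
  calc W.card ≤ (Δ + 1) * S.card := hScard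
    _ ≤ (Δ + 1) * (d + 1) := Nat.mul_le_mul_left _ hSd
/-- Main induction: bound on configurations with pairwise inner products `{a, a-2α}`. -/
lemma key_induction {α : ℝ} (hα0 : 0 < α) (hα1 : α < 1) {Δ : ℕ} (hΔ : 1 + 2/α^2 ≤ (Δ:ℝ)) :
    ∀ ℓ : ℕ, ∀ N a : ℝ, ∀ W : Finset E, N ≤ 1 → a ≤ α →
      a ≤ α^2/2 + ℓ*(α^4/4) →
      (∀ w ∈ W, ⟪w, w⟫ = N) →
      (∀ w ∈ W, ∀ w' ∈ W, w ≠ w' → ⟪w, w'⟫ = a ∨ ⟪w, w'⟫ = a - 2*α) →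
      W.card + 1 ≤ 2^ℓ * ((Δ + 1) * (d + 1) + 1) := by
  classical
  intro ℓ
  induction ℓ with
  | zero =>
    intro N a W hN1 haα hℓ hn hp
    have hc : a ≤ α^2/2 := by simpa using hℓ
    have := case1 hα0 hα1 hΔ hN1 hc W hn hp
    simpa using Nat.add_le_add_right this 1
  | succ ℓ ih =>
    intro N a W hN1 haα hℓ hn hp
    have hpow : 1 ≤ 2^(ℓ+1) := Nat.one_le_two_pow
    by_cases hc : a ≤ α^2/2
    · have h1 := case1 hα0 hα1 hΔ hN1 hc W hn hp
      calc W.card + 1 ≤ (Δ + 1) * (d + 1) + 1 := Nat.add_le_add_right h1 1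
        _ ≤ 2^(ℓ+1) * ((Δ + 1) * (d + 1) + 1) := Nat.le_mul_of_pos_left _ (by positivity)
    · push_neg at hc
      rcases W.eq_empty_or_nonempty with rfl | ⟨u₀, hu₀⟩
      · simpa using Nat.one_le_iff_ne_zero.mpr (by positivity)
      have hN0 : (0:ℝ) ≤ N := by rw [← hn u₀ hu₀]; exact real_inner_self_nonneg
      by_cases hN : N = 0
      · have hzero : ∀ w ∈ W, w = 0 := fun w hw =>
          inner_self_eq_zero.mp (by rw [hn w hw, hN])
        have hcard1 : W.card ≤ 1 := Finset.card_le_one.mpr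
          (fun x hx y hy => (hzero x hx).trans (hzero y hy).symm)
        have h2 : (2:ℕ) ≤ 2^(ℓ+1) := by
          calc (2:ℕ) = 2^1 := rfl
            _ ≤ 2^(ℓ+1) := Nat.pow_le_pow_right (by omega) (by omega)
        have h3 : 2^(ℓ+1) ≤ 2^(ℓ+1) * ((Δ + 1) * (d + 1) + 1) :=
          Nat.le_mul_of_pos_right _ (by omega)
        omega
      have hNpos : (0:ℝ) < N := lt_of_le_of_ne hN0 (Ne.symm hN)
      set b : ℝ := a - 2*α with hbdef
      -- the two classes
      have hclass : ∀ c : ℝ, α^4/4 ≤ c^2/N →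
          ((((W.erase u₀).filter (fun y => ⟪u₀, y⟫ = c)).image
            (fun y => y - (c/N) • u₀)).card + 1 ≤ 2^ℓ * ((Δ + 1) * (d + 1) + 1)) := by
        intro c hc2
        set V := (W.erase u₀).filter (fun y => ⟪u₀, y⟫ = c) with hV
        have hVmem : ∀ y ∈ V, y ∈ W ∧ y ≠ u₀ ∧ ⟪u₀, y⟫ = c := fun y hy => by
          have h1 := Finset.mem_filter.mp hy
          exact ⟨Finset.mem_of_mem_erase h1.1, (Finset.mem_erase.mp h1.1).1, h1.2⟩
        have hexp : ∀ y ∈ V, ∀ y' ∈ V,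
            ⟪y - (c/N) • u₀, y' - (c/N) • u₀⟫ = ⟪y, y'⟫ - c^2/N := by
          intro y hy y' hy'
          obtain ⟨hyW, -, hyc⟩ := hVmem y hy
          obtain ⟨hy'W, -, hy'c⟩ := hVmem y' hy'
          have h1 : ⟪y, u₀⟫ = c := by rw [real_inner_comm]; exact hyc
          have h2 : ⟪u₀, u₀⟫ = N := hn u₀ hu₀
          simp only [inner_sub_left, inner_sub_right, real_inner_smul_left, real_inner_smul_right]
          rw [h1, hy'c, h2]
          field_simp
          ring
        have hcN : (0:ℝ) ≤ c^2/N := by positivity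
        apply ih (N - c^2/N) (a - c^2/N)
        · linarith
        · linarith
        · push_cast at hℓ ⊢
          linarith
        · intro w hw
          obtain ⟨y, hy, rfl⟩ := Finset.mem_image.mp hw
          rw [hexp y hy y hy, hn y (hVmem y hy).1]
        · intro w hw w' hw' hne
          obtain ⟨y, hy, rfl⟩ := Finset.mem_image.mp hw
          obtain ⟨y', hy', rfl⟩ := Finset.mem_image.mp hw'
          have hyy' : y ≠ y' := fun h => hne (by rw [h])
          rw [hexp y hy y' hy']
          rcases hp y (hVmem y hy).1 y' (hVmem y' hy').1 hyy' with h | h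
          · left; rw [h]
          · right; rw [h]; ring
      -- sizes
      have hinj : ∀ c : ℝ, Function.Injective (fun y : E => y - (c/N) • u₀) :=
        fun c x y h => by simpa using h
      have hcover : W.erase u₀ ⊆ ((W.erase u₀).filter (fun y => ⟪u₀, y⟫ = a))
          ∪ ((W.erase u₀).filter (fun y => ⟪u₀, y⟫ = b)) := by
        intro y hy
        have hyW := Finset.mem_of_mem_erase hy
        have hyne : u₀ ≠ y := fun h => (Finset.mem_erase.mp hy).1 h.symm
        rcases hp u₀ hu₀ y hyW hyne with h | h
        · exact Finset.mem_union_left _ (Finset.mem_filter.mpr ⟨hy, h⟩)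
        · exact Finset.mem_union_right _ (Finset.mem_filter.mpr ⟨hy, h⟩)
      have hca : α^4/4 ≤ a^2/N := by
        rw [le_div_iff₀ hNpos]
        have h1 : α^4/4 ≤ a^2 := by nlinarith [hc, hα0, sq_nonneg (a - α^2/2)]
        nlinarith [h1, hN1, hNpos, (by positivity : (0:ℝ) ≤ α^4/4)]
      have hcb : α^4/4 ≤ b^2/N := by
        rw [le_div_iff₀ hNpos]
        have hb1 : α ≤ 2*α - a := by linarith
        have h1 : α^2 ≤ b^2 := by nlinarith [hb1, hα0]
        have h2 : α^4/4 ≤ α^2 := by nlinarith [hα0, hα1, sq_nonneg α]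
        nlinarith [h1, h2, hN1, hNpos, (by positivity : (0:ℝ) ≤ α^4/4)]
      have hA := hclass a hca
      have hB := hclass b hcb
      set Va := (W.erase u₀).filter (fun y => ⟪u₀, y⟫ = a) with hVa
      set Vb := (W.erase u₀).filter (fun y => ⟪u₀, y⟫ = b) with hVb
      have hcarda : (Va.image (fun y => y - (a/N) • u₀)).card = Va.card :=
        Finset.card_image_of_injective _ (hinj a)
      have hcardb : (Vb.image (fun y => y - (b/N) • u₀)).card = Vb.card :=
        Finset.card_image_of_injective _ (hinj b)
      have hWcard : W.card ≤ Va.card + Vb.card + 1 := by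
        have h1 : (W.erase u₀).card + 1 = W.card := Finset.card_erase_add_one hu₀
        have h2 : (W.erase u₀).card ≤ Va.card + Vb.card :=
          le_trans (Finset.card_le_card hcover) (Finset.card_union_le _ _)
        omega
      have hsplit : 2^(ℓ+1) * ((Δ + 1) * (d + 1) + 1)
          = 2^ℓ * ((Δ + 1) * (d + 1) + 1) + 2^ℓ * ((Δ + 1) * (d + 1) + 1) := by ring
      rw [hcarda] at hA
      rw [hcardb] at hB
      omega

end Aux

/-- **Equiangular lines.** For every `0 < α < 1` there is a constant `c_α > 0` such that
for every dimension `d ≥ 1`, any finite set of unit vectors in `ℝ^d` in which the inner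
product of any two distinct vectors is `α` or `-α` has at most `c_α · d` elements.
Equivalently, the number of equiangular lines in `ℝ^d` with common angle `arccos α` is at
most `c_α · d`. -/
theorem equiangular_lines_linear_bound (α : ℝ) (hα0 : 0 < α) (hα1 : α < 1) :
    ∃ c : ℝ, 0 < c ∧ ∀ d : ℕ, 1 ≤ d →
      ∀ P : Finset (EuclideanSpace ℝ (Fin d)),
        (∀ v ∈ P, ‖v‖ = 1) →
        (∀ v ∈ P, ∀ w ∈ P, v ≠ w → ⟪v, w⟫ = -α ∨ ⟪v, w⟫ = α) →
        (P.card : ℝ) ≤ c * d := by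
  obtain ⟨L, hL⟩ := exists_nat_ge (4/α^3)
  set Δ : ℕ := ⌈1 + 2/α^2⌉₊ with hΔdef
  have hΔ : (1:ℝ) + 2/α^2 ≤ (Δ:ℝ) := Nat.le_ceil _
  refine ⟨((2^L * (2*Δ + 3) : ℕ) : ℝ), by positivity, ?_⟩
  intro d hd P hunit hprod
  have hα3 : (0:ℝ) < α^3 := by positivity
  have hstart : α ≤ α^2/2 + (L:ℝ)*(α^4/4) := by
    have h1 : (4/α^3)*(α^4/4) = α := by field_simp
    have h2 : (4/α^3)*(α^4/4) ≤ (L:ℝ)*(α^4/4) :=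
      mul_le_mul_of_nonneg_right hL (by positivity)
    nlinarith [sq_nonneg α]
  have hkey := key_induction hα0 hα1 hΔ L 1 α P le_rfl le_rfl hstart
    (fun v hv => by rw [real_inner_self_eq_norm_sq, hunit v hv]; norm_num)
    (fun v hv w hw hvw => by
      rcases hprod v hv w hw hvw with h | h
      · right; rw [h]; ring
      · left; exact h)
  have hnat : (Δ + 1) * (d + 1) + 1 ≤ (2*Δ + 3) * d := by
    have h1 : (Δ + 2) ≤ (Δ + 2) * d := Nat.le_mul_of_pos_right _ (by omega)
    have h2 : (Δ + 1) * (d + 1) + 1 = (Δ + 1) * d + (Δ + 2) := by ring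
    have h3 : (Δ + 1) * d + (Δ + 2) * d = (2*Δ + 3) * d := by ring
    omega
  have hfin : P.card ≤ 2^L * (2*Δ + 3) * d := by
    have h := le_trans hkey (Nat.mul_le_mul_left (2^L) hnat)
    have h2 : 2^L * ((2*Δ + 3) * d) = 2^L * (2*Δ + 3) * d := (Nat.mul_assoc _ _ _).symm
    omega
  calc (P.card : ℝ) ≤ ((2^L * (2*Δ + 3) * d : ℕ) : ℝ) := by exact_mod_cast hfin
    _ = ((2^L * (2*Δ + 3) : ℕ) : ℝ) * d := by push_cast; ring
end

section
/- Let 0 < β ≤ 1 and 0 < α < 1. For an integer n ≥ 1 set φ = α/(1 + (n-1)α), and define R(m, n) = α²(n − m) + β² m − φ · ((n − m)α − mβ)² for real m. Let t* = (1 − α)(α − β) / (α(α + β)). Then for every integer n ≥ 1 + 8/β² and every real m with 1 ≤ m ≤ n − t* − 1, one has R(m, n) > α(1 − α) + (α + β)²/2. -/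
/-- Auxiliary: `D · R(m,n)` as a polynomial expression. -/
def Gq (α β nr M : ℝ) : ℝ :=
  (1 + (nr - 1) * α) * (α ^ 2 * (nr - M) + β ^ 2 * M) - α * ((nr - M) * α - M * β) ^ 2

set_option maxHeartbeats 1000000 in
lemma Fq_pos (β α : ℝ) (hβ0 : 0 < β) (hβ1 : β ≤ 1) (hα0 : 0 < α) :
    0 < 4*α*(α+β)^4 + β^2*(1/2*α^4 - α^3*β^2 - α^3 - 2*α^2*β^3 - α^2*β^2 - 2*α^2*β
      - α*β^4 - α*β^2 + 1/2*β^4) := by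
  have hb2' : 0 ≤ 1 - β^2 := by nlinarith
  have hb : 0 ≤ 1 - β := by linarith
  have h1 : 0 ≤ α^3*β^2*(1-β^2) := by positivity
  have h2 : 0 ≤ α^2*β^3*(1-β^2) := by positivity
  have h3 : 0 ≤ α^2*β^3*(1-β) := by positivity
  have h4 : 0 ≤ α*β^4*(1-β^2) := by positivity
  nlinarith [pow_pos hα0 5, mul_pos (pow_pos hα0 4) hβ0,
    mul_pos (pow_pos hα0 3) (pow_pos hβ0 2), mul_pos (pow_pos hα0 2) (pow_pos hβ0 3),
    mul_pos hα0 (pow_pos hβ0 4), pow_pos hβ0 6]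

set_option maxHeartbeats 1000000 in
lemma endpoint_one (β α nr : ℝ) (hβ0 : 0 < β) (hβ1 : β ≤ 1)
    (hα0 : 0 < α) (hα1 : α < 1) (h8 : (8:ℝ) ≤ β^2 * (nr - 1)) :
    (1 + (nr - 1) * α) * (α * (1 - α) + (α + β) ^ 2 / 2) < Gq α β nr 1 := by
  have hkey : Gq α β nr 1 - (1 + (nr - 1) * α) * (α * (1 - α) + (α + β) ^ 2 / 2)
      = (1 + (nr - 1) * α) * (α+β)^2/2 - α*(1+β)^2 := by
    simp only [Gq]; ring
  have h1' : β^2 + 8*α ≤ β^2 * (1 + (nr - 1) * α) := by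
    nlinarith [mul_nonneg hα0.le (by linarith : (0:ℝ) ≤ β^2*(nr-1) - 8)]
  have f1 : (β^2 + 8*α) * (α+β)^2 ≤ β^2 * (1 + (nr - 1) * α) * (α+β)^2 :=
    mul_le_mul_of_nonneg_right h1' (sq_nonneg (α+β))
  have f2 : 0 ≤ 2*α*β^2*(4 - (1+β)^2) :=
    mul_nonneg (by positivity) (by nlinarith [mul_nonneg (by linarith : (0:ℝ) ≤ 1-β) (by linarith : (0:ℝ) ≤ 3+β)])
  have f3 : 0 < β^2*(α+β)^2 := by positivity
  have f4 : 0 ≤ 8*α*((α+β)^2 - β^2) := by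
    nlinarith [pow_pos hα0 3, mul_pos (mul_pos hα0 hα0) hβ0]
  have hb2pos : (0:ℝ) < β^2 := by positivity
  have target2 : 0 < β^2 * (1 + (nr - 1) * α) * (α+β)^2 - 2*α*β^2*(1+β)^2 := by nlinarith
  nlinarith [hkey, target2, hb2pos]

set_option maxHeartbeats 1000000 in
lemma endpoint_two (β α nr : ℝ) (hβ0 : 0 < β) (hβ1 : β ≤ 1)
    (hα0 : 0 < α) (hα1 : α < 1) (h8 : (8:ℝ) ≤ β^2 * (nr - 1)) :
    (1 + (nr - 1) * α) * (α * (1 - α) + (α + β) ^ 2 / 2)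
      < Gq α β nr (nr - (1 - α) * (α - β) / (α * (α + β)) - 1) := by
  have hαβ : 0 < α + β := by linarith
  have hαβ' : α * (α + β) ≠ 0 := by positivity
  have hb2pos : (0:ℝ) < β^2 := by positivity
  have hkey : (α*(α+β))^2 * (Gq α β nr (nr - (1 - α) * (α - β) / (α * (α + β)) - 1)
        - (1 + (nr - 1) * α) * (α * (1 - α) + (α + β) ^ 2 / 2))
      = (1/2)*α^3*(α+β)^4*(nr-1) + α^2*(1/2*α^4 - α^3*β^2 - α^3 - 2*α^2*β^3 - α^2*β^2
        - 2*α^2*β - α*β^4 - α*β^2 + 1/2*β^4) := by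
    simp only [Gq]
    field_simp
    ring
  have hRHS : 0 < (1/2)*α^3*(α+β)^4*(nr-1) + α^2*(1/2*α^4 - α^3*β^2 - α^3 - 2*α^2*β^3
      - α^2*β^2 - 2*α^2*β - α*β^4 - α*β^2 + 1/2*β^4) := by
    have ha : 0 ≤ (1/2)*α^3*(α+β)^4*(β^2*(nr-1) - 8) := by
      have : (0:ℝ) ≤ β^2*(nr-1) - 8 := by linarith
      positivity
    have hb : 0 < α^2 * (4*α*(α+β)^4 + β^2*(1/2*α^4 - α^3*β^2 - α^3 - 2*α^2*β^3 - α^2*β^2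
        - 2*α^2*β - α*β^4 - α*β^2 + 1/2*β^4)) :=
      mul_pos (by positivity) (Fq_pos β α hβ0 hβ1 hα0)
    nlinarith [ha, hb, hb2pos]
  have hsq : 0 < (α*(α+β))^2 := by positivity
  nlinarith [hkey, hRHS, hsq]

set_option maxHeartbeats 1000000 in
/-- **Quadratic estimate.** Let `0 < β ≤ 1`, `0 < α < 1`, and for an integer `n ≥ 1` set
`φ = α/(1 + (n-1)α)` and `R(m,n) = α²(n-m) + β²m − φ((n-m)α − mβ)²`. Let
`t* = (1-α)(α-β)/(α(α+β))`. Then for every integer `n ≥ 1 + 8/β²` and every real `m` with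
`1 ≤ m ≤ n − t* − 1` we have `R(m,n) > α(1-α) + (α+β)²/2`. -/
theorem quadratic_estimate (β α : ℝ) (hβ0 : 0 < β) (hβ1 : β ≤ 1)
    (hα0 : 0 < α) (hα1 : α < 1)
    (n : ℕ) (hn1 : 1 ≤ n) (hn : (1 + 8 / β ^ 2 : ℝ) ≤ n)
    (m : ℝ) (hm1 : 1 ≤ m)
    (hm2 : m ≤ n - (1 - α) * (α - β) / (α * (α + β)) - 1) :
    α * (1 - α) + (α + β) ^ 2 / 2 <
      α ^ 2 * (n - m) + β ^ 2 * m -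
        (α / (1 + (n - 1 : ℝ) * α)) * ((n - m) * α - m * β) ^ 2 := by
  have hb2pos : (0 : ℝ) < β ^ 2 := by positivity
  have h8 : (8 : ℝ) ≤ β ^ 2 * ((n : ℝ) - 1) := by
    have h : 8 / β ^ 2 ≤ (n : ℝ) - 1 := by linarith
    calc (8 : ℝ) = β ^ 2 * (8 / β ^ 2) := by field_simp
    _ ≤ β ^ 2 * ((n : ℝ) - 1) := mul_le_mul_of_nonneg_left h hb2pos.le
  have hn1' : (1 : ℝ) ≤ (n : ℝ) := by exact_mod_cast hn1
  have hαβ : 0 < α + β := by linarith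
  have hD0 : 0 < 1 + ((n : ℝ) - 1) * α := by nlinarith
  have hA := endpoint_one β α (n : ℝ) hβ0 hβ1 hα0 hα1 h8
  have hBpt := endpoint_two β α (n : ℝ) hβ0 hβ1 hα0 hα1 h8
  -- concavity of the quadratic in m
  have hGm : (1 + ((n:ℝ) - 1) * α) * (α * (1 - α) + (α + β) ^ 2 / 2) < Gq α β (n:ℝ) m := by
    rcases eq_or_lt_of_le hm1 with heq | hlt
    · rw [← heq]; exact hA
    · set b2 : ℝ := (n:ℝ) - (1 - α) * (α - β) / (α * (α + β)) - 1 with hb2def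
      set DB : ℝ := (1 + ((n:ℝ) - 1) * α) * (α * (1 - α) + (α + β) ^ 2 / 2) with hDBdef
      have hm2' : m ≤ b2 := hm2
      have hb21 : 0 < b2 - 1 := by linarith
      have idC : (b2 - 1) * (Gq α β (n:ℝ) m - DB)
          = (b2 - m) * (Gq α β (n:ℝ) 1 - DB) + (m - 1) * (Gq α β (n:ℝ) b2 - DB)
            + α*(α+β)^2*(m-1)*(b2-m)*(b2-1) := by
        simp only [Gq]; ring
      have hpos : 0 < (b2 - 1) * (Gq α β (n:ℝ) m - DB) := by
        rw [idC]
        have t1 : 0 ≤ (b2 - m) * (Gq α β (n:ℝ) 1 - DB) :=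
          mul_nonneg (by linarith) (by linarith)
        have t2 : 0 < (m - 1) * (Gq α β (n:ℝ) b2 - DB) :=
          mul_pos (by linarith) (by linarith)
        have t3 : 0 ≤ α*(α+β)^2*(m-1)*(b2-m)*(b2-1) := by
          have h1 : (0:ℝ) ≤ m - 1 := by linarith
          have h2 : (0:ℝ) ≤ b2 - m := by linarith
          have h3 : (0:ℝ) ≤ b2 - 1 := by linarith
          positivity
        linarith
      rcases mul_pos_iff.mp hpos with ⟨_, h⟩ | ⟨h, _⟩
      · linarith
      · linarith
  have hrw : α ^ 2 * ((n:ℝ) - m) + β ^ 2 * m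
        - (α / (1 + ((n:ℝ) - 1) * α)) * (((n:ℝ) - m) * α - m * β) ^ 2
      = (Gq α β (n:ℝ) m) / (1 + ((n:ℝ) - 1) * α) := by
    simp only [Gq]; generalize 1 + ((n:ℝ) - 1) * α = D at hD0 ⊢; field_simp
  rw [hrw, lt_div_iff₀ hD0]
  nlinarith [hGm]
end

section
/- Let 0 < β ≤ 1 and 0 < α < 1. For an integer n ≥ 1 set φ = α/(1 + (n-1)α), and define R(m, n) = α²(n − m) + β² m − φ · ((n − m)α − mβ)² for real m. Let t* = (1 − α)(α − β) / (α(α + β)). Then R(m, n) = R(n − t* − m, n) for all real m; consequently, for fixed n, the quadratic R(·, n) attains its maximum at m = (n − t*)/2. -/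
/-- **Symmetry of the quadratic.** Let `0 < β ≤ 1`, `0 < α < 1`, and for an integer
`n ≥ 1` set `φ = α/(1 + (n-1)α)` and `R(m,n) = α²(n-m) + β²m − φ((n-m)α − mβ)²`. With
`t* = (1-α)(α-β)/(α(α+β))`, we have `R(m,n) = R(n − t* − m, n)` for all real `m`;
consequently, for fixed `n`, the quadratic `R(·,n)` attains its maximum at
`m = (n − t*)/2`. -/
theorem quadratic_symmetry (β α : ℝ) (hβ0 : 0 < β) (hβ1 : β ≤ 1)
    (hα0 : 0 < α) (hα1 : α < 1) (n : ℕ) (hn1 : 1 ≤ n) :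
    let φ : ℝ := α / (1 + (n - 1 : ℝ) * α)
    let R : ℝ → ℝ := fun m => α ^ 2 * ((n : ℝ) - m) + β ^ 2 * m -
      φ * (((n : ℝ) - m) * α - m * β) ^ 2
    let tstar : ℝ := (1 - α) * (α - β) / (α * (α + β))
    (∀ m : ℝ, R m = R ((n : ℝ) - tstar - m)) ∧
      ∀ m : ℝ, R m ≤ R (((n : ℝ) - tstar) / 2) := by
  intro φ R tstar
  have hn : (1 : ℝ) ≤ (n : ℝ) := by exact_mod_cast hn1
  have hD : (0:ℝ) < 1 + ((n:ℝ) - 1) * α := by nlinarith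
  have hD' : (1:ℝ) + ((n:ℝ) - 1) * α ≠ 0 := ne_of_gt hD
  have hab : α * (α + β) ≠ 0 := by positivity
  have key : ∀ m : ℝ, R (((n : ℝ) - tstar) / 2) - R m =
      φ * (α + β) ^ 2 * (m - ((n : ℝ) - tstar) / 2) ^ 2 := by
    intro m
    show (α ^ 2 * ((n : ℝ) - _) + β ^ 2 * _ - _) - (α ^ 2 * ((n : ℝ) - m) + β ^ 2 * m - _) = _
    simp only [φ, tstar]
    generalize hd : (1 + ((n:ℝ)-1)*α) = D at *
    field_simp
    subst hd
    ring
  constructor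
  · intro m
    have h1 := key m
    have h2 := key ((n : ℝ) - tstar - m)
    have : (m - ((n : ℝ) - tstar) / 2) ^ 2 = (((n : ℝ) - tstar - m) - ((n : ℝ) - tstar) / 2) ^ 2 := by
      ring
    rw [← this] at h2
    have h3 := h1.trans h2.symm
    exact sub_right_injective h3
  · intro m
    have h1 := key m
    have hφ : 0 < φ := div_pos hα0 hD
    have := mul_nonneg (mul_nonneg hφ.le (sq_nonneg (α + β))) (sq_nonneg (m - ((n : ℝ) - tstar) / 2))
    linarith
end

section
/- Let 0 < β ≤ 1, 0 < α < 1 and ε > 0. Let p_1, …, p_n be unit vectors in R^d with ⟨p_i, p_j⟩ = α for all i ≠ j, and let W = span{p_1, …, p_n}. Let p^(1), …, p^(m) be unit vectors in R^d such that ⟨p^(i), p^(j)⟩ ∈ [-1, -β] ∪ {α} for all i ≠ j. Write p^(i) = v^(i) + u^(i) with v^(i) ∈ W and u^(i) orthogonal to W, and suppose ⟨v^(i), v^(j)⟩ > α + ε for all i ≠ j. Then m ≤ 1/ε + 1. -/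
open scoped RealInnerProductSpace

/-- **Lemma 6.** Let `0 < β ≤ 1`, `0 < α < 1` and `ε > 0`. Let `p_1, …, p_n` be unit
vectors with pairwise inner products `α`, spanning `W`, and let `q^(1), …, q^(m)` be unit
vectors with pairwise inner products in `[-1,-β] ∪ {α}`. Write `q^(i) = v^(i) + u^(i)`
with `v^(i) ∈ W` and `u^(i) ⊥ W`. If `⟪v^(i), v^(j)⟫ > α + ε` for all `i ≠ j`, then
`m ≤ 1/ε + 1`. -/
theorem bad_vectors_bound (d n m : ℕ) (β α ε : ℝ) (hβ0 : 0 < β) (hβ1 : β ≤ 1)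
    (hα0 : 0 < α) (hα1 : α < 1) (hε : 0 < ε)
    (p : Fin n → EuclideanSpace ℝ (Fin d))
    (hpnorm : ∀ i, ‖p i‖ = 1)
    (hpinner : ∀ i j, i ≠ j → ⟪p i, p j⟫ = α)
    (q : Fin m → EuclideanSpace ℝ (Fin d))
    (hqnorm : ∀ i, ‖q i‖ = 1)
    (hqinner : ∀ i j, i ≠ j → ⟪q i, q j⟫ ∈ Set.Icc (-1 : ℝ) (-β) ∪ {α})
    (v u : Fin m → EuclideanSpace ℝ (Fin d))
    (hv : ∀ i, v i ∈ Submodule.span ℝ (Set.range p))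
    (hu : ∀ i, u i ∈ (Submodule.span ℝ (Set.range p))ᗮ)
    (hq_eq : ∀ i, q i = v i + u i)
    (hvinner : ∀ i j, i ≠ j → α + ε < ⟪v i, v j⟫) :
    (m : ℝ) ≤ 1 / ε + 1 := by
  have hcross : ∀ i j, ⟪v i, u j⟫ = 0 := fun i j =>
    (Submodule.mem_orthogonal _ (u j)).mp (hu j) (v i) (hv i)
  have hqq : ∀ i j, ⟪q i, q j⟫ = ⟪v i, v j⟫ + ⟪u i, u j⟫ := by
    intro i j
    have h2 : ⟪u i, v j⟫ = 0 := by rw [real_inner_comm]; exact hcross j i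
    rw [hq_eq i, hq_eq j, inner_add_left, inner_add_right, inner_add_right,
      hcross i j, h2]
    ring
  have hd : ∀ i, ⟪u i, u i⟫ ≤ 1 := by
    intro i
    have h1 := hqq i i
    have hn : ⟪q i, q i⟫ = 1 := by
      rw [real_inner_self_eq_norm_sq, hqnorm i]; norm_num
    have := real_inner_self_nonneg (x := v i)
    linarith
  have hoff : ∀ i j, i ≠ j → ⟪u i, u j⟫ ≤ -ε := by
    intro i j hij
    have h := hqq i j
    have hv' := hvinner i j hij
    rcases hqinner i j hij with ⟨_, h1b⟩ | h1
    · linarith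
    · simp only [Set.mem_singleton_iff] at h1
      linarith
  have hsum : (0:ℝ) ≤ ∑ i, ∑ j, ⟪u i, u j⟫ := by
    have h : ∑ i, ∑ j, ⟪u i, u j⟫ = ⟪∑ i, u i, ∑ j, u j⟫ := by
      rw [sum_inner]
      exact Finset.sum_congr rfl fun i _ => (inner_sum _ _ _).symm
    rw [h]
    exact real_inner_self_nonneg
  have hbound : ∑ i, ∑ j, ⟪u i, u j⟫ ≤ (m:ℝ) - m*(m-1)*ε := by
    calc ∑ i, ∑ j, ⟪u i, u j⟫
        ≤ ∑ i : Fin m, ∑ j : Fin m, ((-ε) + if i = j then (1+ε) else 0) := by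
          apply Finset.sum_le_sum; intro i _
          apply Finset.sum_le_sum; intro j _
          by_cases h : i = j
          · subst h; simpa using hd i
          · simpa [h] using hoff i j h
      _ = (m:ℝ) - m*(m-1)*ε := by
          simp [Finset.sum_add_distrib, Finset.sum_ite_eq, Finset.mul_sum]
          ring
  have hkey : (m:ℝ)*(m-1)*ε ≤ m := by linarith
  rcases Nat.eq_zero_or_pos m with hm | hm
  · subst hm; simp; positivity
  · have hm1 : (1:ℝ) ≤ m := by exact_mod_cast hm
    have h2 : (m:ℝ) - 1 ≤ 1/ε := by
      rw [le_div_iff₀ hε]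
      nlinarith
    linarith
end

section
/- Let 0 < β ≤ 1 and δ > 0. Then there exists a constant M = M(β, δ) such that the following holds for every 0 < α < 1, every dimension d, and every [-1,-β] ∪ {α}-spherical code P in R^d. Define a graph G on vertex set P by joining v and v' when ⟨v, v'⟩ ∈ [-1, -β]. For every subset U ⊆ P, if I is an independent set in the induced subgraph G[U] of maximum size, then there is a subset U' ⊆ U \ I with |U'| ≥ |U| − M·|I| such that every vertex of U' is adjacent in G to at least (1 − δ)·|I| vertices of I. -/
open scoped RealInnerProductSpace Classical

set_option linter.unusedVariables false
set_option maxHeartbeats 1600000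


section Aux
variable {V : Type*} [NormedAddCommGroup V] [InnerProductSpace ℝ V]

lemma sum_sq_expand (F : Finset V) :
    ⟪∑ v ∈ F, v, ∑ v ∈ F, v⟫ = ∑ v ∈ F, ∑ u ∈ F, ⟪v, u⟫ := by
  simp only [sum_inner, inner_sum]; rw [Finset.sum_comm]

lemma pair_bound (F : Finset V) (γ : ℝ)
    (hunit : ∀ v ∈ F, ⟪v, v⟫ = 1)
    (hpair : ∀ v ∈ F, ∀ u ∈ F, v ≠ u → ⟪v, u⟫ ≤ γ) :
    ∑ v ∈ F, ∑ u ∈ F, ⟪v, u⟫ ≤ F.card + F.card * (F.card - 1) * γ := by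
  have h1 : ∀ v ∈ F, ∑ u ∈ F, ⟪v, u⟫ ≤ 1 + ((F.card : ℝ) - 1) * γ := by
    intro v hv
    have he : ⟪v, v⟫ + ∑ u ∈ F.erase v, ⟪v, u⟫ = ∑ u ∈ F, ⟪v, u⟫ :=
      Finset.add_sum_erase F _ hv
    have hb : ∑ u ∈ F.erase v, ⟪v, u⟫ ≤ (F.erase v).card • γ :=
      Finset.sum_le_card_nsmul _ _ _ (fun u hu =>
        hpair v hv u (Finset.mem_of_mem_erase hu) (Ne.symm (Finset.ne_of_mem_erase hu)))
    have hc : ((F.erase v).card : ℝ) = (F.card : ℝ) - 1 := by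
      rw [Finset.card_erase_of_mem hv]
      have : 1 ≤ F.card := Finset.card_pos.2 ⟨v, hv⟩
      push_cast [this]; ring
    rw [nsmul_eq_mul, hc] at hb
    rw [← he, hunit v hv]
    linarith
  calc ∑ v ∈ F, ∑ u ∈ F, ⟪v, u⟫ ≤ ∑ v ∈ F, (1 + ((F.card : ℝ) - 1) * γ) :=
        Finset.sum_le_sum h1
    _ = F.card + F.card * (F.card - 1) * γ := by
        rw [Finset.sum_const, nsmul_eq_mul]; ring

lemma clique_bound (F : Finset V) (β : ℝ) (hβ : 0 < β)
    (hunit : ∀ v ∈ F, ⟪v, v⟫ = 1)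
    (hpair : ∀ v ∈ F, ∀ u ∈ F, v ≠ u → ⟪v, u⟫ ≤ -β) :
    (F.card : ℝ) ≤ 1 + 1 / β := by
  have h0 : (0:ℝ) ≤ ∑ v ∈ F, ∑ u ∈ F, ⟪v, u⟫ := by
    rw [← sum_sq_expand]; exact real_inner_self_nonneg
  have h1 := pair_bound F (-β) hunit hpair
  rcases Nat.eq_zero_or_pos F.card with h | h
  · simp [h]; positivity
  · have hn : (1:ℝ) ≤ F.card := by exact_mod_cast h
    have key : ((F.card:ℝ) - 1) * β ≤ 1 := by nlinarith
    have key2 : (F.card:ℝ) - 1 ≤ 1 / β := by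
      rw [le_div_iff₀ hβ]; exact key
    linarith

lemma deg_bound (F : Finset V) (u : V) (β γ : ℝ) (hβ : 0 < β) (hγ0 : 0 ≤ γ)
    (hγ : γ < β ^ 2)
    (huu : ⟪u, u⟫ = 1)
    (hunit : ∀ v ∈ F, ⟪v, v⟫ = 1)
    (hneg : ∀ v ∈ F, ⟪u, v⟫ ≤ -β)
    (hpair : ∀ v ∈ F, ∀ v' ∈ F, v ≠ v' → ⟪v, v'⟫ ≤ γ) :
    (F.card : ℝ) ≤ 1 / (β ^ 2 - γ) := by
  have hpos : (0:ℝ) < β ^ 2 - γ := by linarith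
  rcases Nat.eq_zero_or_pos F.card with h | h
  · simp only [h, Nat.cast_zero]; exact (one_div_pos.2 hpos).le
  · have hn : (1:ℝ) ≤ F.card := by exact_mod_cast h
    set n : ℝ := (F.card : ℝ) with hn'
    set S : V := ∑ v ∈ F, v with hS
    have h0 : (0:ℝ) ≤ ⟪S + (n * β) • u, S + (n * β) • u⟫ := real_inner_self_nonneg
    rw [real_inner_add_add_self] at h0
    simp only [real_inner_smul_left, real_inner_smul_right, huu] at h0
    have hSS : ⟪S, S⟫ ≤ n + n * (n - 1) * γ := by
      rw [hS, sum_sq_expand]; exact pair_bound F γ hunit hpair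
    have hSu : ⟪S, u⟫ ≤ -β * n := by
      rw [hS, sum_inner]
      calc ∑ v ∈ F, ⟪v, u⟫ ≤ F.card • (-β) :=
            Finset.sum_le_card_nsmul _ _ _
              (fun v hv => by rw [real_inner_comm]; exact hneg v hv)
        _ = -β * n := by rw [nsmul_eq_mul]; ring
    have hmul : n * β * ⟪S, u⟫ ≤ n * β * (-β * n) :=
      mul_le_mul_of_nonneg_left hSu (by positivity)
    have hkey : 0 ≤ n + n * (n - 1) * γ - n ^ 2 * β ^ 2 := by nlinarith
    rw [le_div_iff₀ hpos]
    have hnpos : (0:ℝ) < n := lt_of_lt_of_le zero_lt_one hn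
    nlinarith
end Aux

lemma choose_le_two_pow (a b : ℕ) : (a + b).choose a ≤ 2 ^ (a + b) := by
  have h := Nat.sum_range_choose (a + b)
  have hmem : a ∈ Finset.range (a + b + 1) := by
    rw [Finset.mem_range]; omega
  calc (a+b).choose a ≤ ∑ i ∈ Finset.range (a + b + 1), (a+b).choose i :=
        Finset.single_le_sum (fun i _ => Nat.zero_le _) hmem
    _ = 2 ^ (a+b) := h


lemma ramsey_bound {X : Type*} [DecidableEq X] :
    ∀ (n a b : ℕ), a + b ≤ n → ∀ (V : Finset X) (E : X → X → Prop),
      (∀ x y, E x y → E y x) →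
      (∀ C ⊆ V, (∀ x ∈ C, ∀ y ∈ C, x ≠ y → E x y) → C.card ≤ a) →
      (∀ J ⊆ V, (∀ x ∈ J, ∀ y ∈ J, x ≠ y → ¬E x y) → J.card ≤ b) →
      V.card + 1 ≤ (a + b).choose a := by
  intro n
  induction n with
  | zero =>
    intro a b hab V E hsym hcl hind
    have ha : a = 0 := by omega
    have hV : V = ∅ := by
      by_contra h
      obtain ⟨v, hv⟩ := Finset.nonempty_of_ne_empty h
      have := hcl {v} (Finset.singleton_subset_iff.2 hv) (by simp)
      simp [ha] at this
    simp [hV, ha, Nat.choose_zero_right]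
  | succ n ih =>
    intro a b hab V E hsym hcl hind
    rcases Nat.eq_zero_or_pos a with ha | ha
    · have hV : V = ∅ := by
        by_contra h
        obtain ⟨v, hv⟩ := Finset.nonempty_of_ne_empty h
        have := hcl {v} (Finset.singleton_subset_iff.2 hv) (by simp)
        simp [ha] at this
      simp [hV, ha]
    rcases Nat.eq_zero_or_pos b with hb | hb
    · have hV : V = ∅ := by
        by_contra h
        obtain ⟨v, hv⟩ := Finset.nonempty_of_ne_empty h
        have := hind {v} (Finset.singleton_subset_iff.2 hv) (by simp)
        simp [hb] at this
      rw [hV]; simp only [Finset.card_empty, zero_add]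
      exact Nat.choose_pos (by omega)
    obtain ⟨a', rfl⟩ : ∃ a', a = a' + 1 := ⟨a - 1, by omega⟩
    obtain ⟨b', rfl⟩ : ∃ b', b = b' + 1 := ⟨b - 1, by omega⟩
    rcases V.eq_empty_or_nonempty with hV | ⟨v, hv⟩
    · rw [hV]; simp only [Finset.card_empty, zero_add]
      exact Nat.choose_pos (by omega)
    set N1 : Finset X := (V.erase v).filter (fun x => E v x) with hN1
    set N2 : Finset X := (V.erase v).filter (fun x => ¬E v x) with hN2
    have hcard : V.card ≤ N1.card + N2.card + 1 := by
      have hsub : V ⊆ insert v (N1 ∪ N2) := by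
        intro x hx
        rcases eq_or_ne x v with rfl | hxv
        · exact Finset.mem_insert_self _ _
        · apply Finset.mem_insert_of_mem
          rw [Finset.mem_union]
          by_cases hE : E v x
          · exact Or.inl (by simp [hN1, Finset.mem_filter, Finset.mem_erase, hxv, hx, hE])
          · exact Or.inr (by simp [hN2, Finset.mem_filter, Finset.mem_erase, hxv, hx, hE])
      calc V.card ≤ (insert v (N1 ∪ N2)).card := Finset.card_le_card hsub
        _ ≤ (N1 ∪ N2).card + 1 := Finset.card_insert_le _ _
        _ ≤ N1.card + N2.card + 1 := by
            have := Finset.card_union_le N1 N2; omega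
    have h1 : N1.card + 1 ≤ (a' + (b' + 1)).choose a' := by
      apply ih a' (b' + 1) (by omega) N1 E hsym
      · intro C hC hCcl
        have hvC : v ∉ C := fun hvc =>
          (Finset.notMem_erase v V) (Finset.mem_of_mem_filter v (hC hvc))
        have := hcl (insert v C)
          (Finset.insert_subset hv (hC.trans ((Finset.filter_subset _ _).trans (Finset.erase_subset _ _))))
          ?_
        · rw [Finset.card_insert_of_notMem hvC] at this; omega
        · intro x hx y hy hxy
          rcases Finset.mem_insert.1 hx with rfl | hx' <;>
            rcases Finset.mem_insert.1 hy with rfl | hy'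
          · exact absurd rfl hxy
          · exact (Finset.mem_filter.1 (hC hy')).2
          · exact hsym _ _ (Finset.mem_filter.1 (hC hx')).2
          · exact hCcl x hx' y hy' hxy
      · intro J hJ hJind
        exact hind J (hJ.trans ((Finset.filter_subset _ _).trans (Finset.erase_subset _ _))) hJind
    have h2 : N2.card + 1 ≤ ((a' + 1) + b').choose (a' + 1) := by
      apply ih (a' + 1) b' (by omega) N2 E hsym
      · intro C hC hCcl
        exact hcl C (hC.trans ((Finset.filter_subset _ _).trans (Finset.erase_subset _ _))) hCcl
      · intro J hJ hJind
        have hvJ : v ∉ J := fun hvj =>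
          (Finset.notMem_erase v V) (Finset.mem_of_mem_filter v (hJ hvj))
        have := hind (insert v J)
          (Finset.insert_subset hv (hJ.trans ((Finset.filter_subset _ _).trans (Finset.erase_subset _ _))))
          ?_
        · rw [Finset.card_insert_of_notMem hvJ] at this; omega
        · intro x hx y hy hxy
          rcases Finset.mem_insert.1 hx with rfl | hx' <;>
            rcases Finset.mem_insert.1 hy with rfl | hy'
          · exact absurd rfl hxy
          · exact (Finset.mem_filter.1 (hJ hy')).2
          · exact fun hE => (Finset.mem_filter.1 (hJ hx')).2 (hsym _ _ hE)
          · exact hJind x hx' y hy' hxy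
    have hpascal : ((a' + 1) + (b' + 1)).choose (a' + 1)
        = (a' + (b' + 1)).choose a' + ((a' + 1) + b').choose (a' + 1) := by
      have h3 : (a' + 1) + (b' + 1) = (a' + b' + 1) + 1 := by omega
      have h4 : a' + (b' + 1) = a' + b' + 1 := by omega
      have h5 : (a' + 1) + b' = a' + b' + 1 := by omega
      rw [h3, h4, h5]
      exact Nat.choose_succ_succ _ _
    omega


lemma proj_induction {d : ℕ} (β ρ : ℝ) (hβ0 : 0 < β) (hρ : 1 ≤ ρ) :
    ∀ (k : ℕ) (α : ℝ), 0 < α → α < 1 → 2 / β ^ 2 ≤ (k : ℝ) + 1 / α →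
    ∀ (I B : Finset (EuclideanSpace ℝ (Fin d))) (m : ℕ),
      (∀ v ∈ I, ⟪v, v⟫ = 1) →
      (∀ v ∈ B, ⟪v, v⟫ = 1) →
      (∀ v ∈ I, ∀ w ∈ I, v ≠ w → ⟪v, w⟫ = α) →
      (∀ v ∈ B, ∀ w ∈ I, ⟪v, w⟫ = α ∨ ⟪v, w⟫ ≤ -β) →
      (∀ v ∈ B, ∀ w ∈ B, v ≠ w → ⟪v, w⟫ ≤ α) →
      (∀ v ∈ B, ∃ w ∈ I, ⟪v, w⟫ ≤ -β) →
      (∀ v ∈ B, m ≤ (I.filter fun w => ⟪v, w⟫ = α).card) →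
      ((I.card : ℝ) ≤ ρ * ((m : ℝ) - k)) →
      (B.card : ℝ) ≤ ρ ^ k * (2 / β ^ 2) * I.card := by
  have hρ0 : (0:ℝ) < ρ := lt_of_lt_of_le zero_lt_one hρ
  have hβ2 : (0:ℝ) < β ^ 2 := by positivity
  intro k
  induction k with
  | zero =>
    intro α hα0 hα1 hαk I B m hIu hBu hII hBI hBB hnbr hcount hratio
    have hαβ : α ≤ β ^ 2 / 2 := by
      rw [Nat.cast_zero, zero_add] at hαk
      rw [div_le_div_iff₀ hβ2 hα0] at hαk
      nlinarith
    have hsub : B ⊆ I.biUnion (fun w => B.filter fun v => ⟪v, w⟫ ≤ -β) := by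
      intro v hv
      obtain ⟨w, hw, hvw⟩ := hnbr v hv
      exact Finset.mem_biUnion.2 ⟨w, hw, Finset.mem_filter.2 ⟨hv, hvw⟩⟩
    have h1 : B.card ≤ ∑ w ∈ I, (B.filter fun v => ⟪v, w⟫ ≤ -β).card :=
      le_trans (Finset.card_le_card hsub) (Finset.card_biUnion_le)
    have h2 : ∀ w ∈ I, ((B.filter fun v => ⟪v, w⟫ ≤ -β).card : ℝ) ≤ 2 / β ^ 2 := by
      intro w hw
      have hd := deg_bound (B.filter fun v => ⟪v, w⟫ ≤ -β) w β α hβ0 hα0.le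
        (by nlinarith) (hIu w hw)
        (fun v hv => hBu v (Finset.mem_of_mem_filter v hv))
        (fun v hv => by
          rw [real_inner_comm]; exact (Finset.mem_filter.1 hv).2)
        (fun v hv v' hv' hne => hBB v (Finset.mem_of_mem_filter v hv)
          v' (Finset.mem_of_mem_filter v' hv') hne)
      refine le_trans hd ?_
      rw [div_le_div_iff₀ (by nlinarith) hβ2]
      nlinarith
    calc (B.card : ℝ) ≤ ∑ w ∈ I, ((B.filter fun v => ⟪v, w⟫ ≤ -β).card : ℝ) := by
          exact_mod_cast h1
      _ ≤ ∑ w ∈ I, (2 / β ^ 2) := Finset.sum_le_sum h2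
      _ = (2 / β ^ 2) * I.card := by rw [Finset.sum_const, nsmul_eq_mul]; ring
      _ = ρ ^ 0 * (2 / β ^ 2) * I.card := by ring
  | succ k ih =>
    intro α hα0 hα1 hαk I B m hIu hBu hII hBI hBB hnbr hcount hratio
    rcases B.eq_empty_or_nonempty with hB | hB
    · rw [hB]
      simp only [Finset.card_empty, Nat.cast_zero]
      positivity
    obtain ⟨v0, hv0⟩ := hB
    obtain ⟨w0, hw0, _⟩ := hnbr v0 hv0
    have hIne : I.Nonempty := ⟨w0, hw0⟩
    have ht1 : 1 ≤ I.card := Finset.card_pos.2 hIne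
    have ht1' : (1:ℝ) ≤ I.card := by exact_mod_cast ht1
    -- m is large
    have hm : (k:ℝ) + 1 < m := by
      by_contra h
      push_neg at h
      have : ρ * ((m:ℝ) - (k+1)) ≤ 0 := by
        apply mul_nonpos_of_nonneg_of_nonpos hρ0.le
        push_cast at h ⊢
        linarith
      push_cast at hratio
      linarith
    have hm1 : 1 ≤ m := by
      have : (0:ℝ) < m := by push_cast; linarith [Nat.cast_nonneg (α := ℝ) k]
      exact_mod_cast Nat.one_le_iff_ne_zero.2 (by exact_mod_cast Nat.pos_of_ne_zero (by
        intro h; rw [h] at this; norm_num at this) |>.ne')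
    -- pigeonhole
    obtain ⟨w, hwI, hwmax⟩ := I.exists_max_image
      (fun w => (B.filter fun v => ⟪v, w⟫ = α).card) hIne
    have hdc : m * B.card ≤ ∑ w' ∈ I, (B.filter fun v => ⟪v, w'⟫ = α).card := by
      have e1 : ∑ v ∈ B, (I.filter fun w' => ⟪v, w'⟫ = α).card
          = ∑ w' ∈ I, (B.filter fun v => ⟪v, w'⟫ = α).card := by
        simp_rw [Finset.card_filter]
        exact Finset.sum_comm
      calc m * B.card = ∑ _v ∈ B, m := by rw [Finset.sum_const, smul_eq_mul, mul_comm]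
        _ ≤ ∑ v ∈ B, (I.filter fun w' => ⟪v, w'⟫ = α).card :=
            Finset.sum_le_sum (fun v hv => hcount v hv)
        _ = _ := e1
    have hkey : m * B.card ≤ I.card * (B.filter fun v => ⟪v, w⟫ = α).card := by
      refine le_trans hdc ?_
      calc ∑ w' ∈ I, (B.filter fun v => ⟪v, w'⟫ = α).card
          ≤ I.card • (B.filter fun v => ⟪v, w⟫ = α).card :=
            Finset.sum_le_card_nsmul _ _ _ (fun w' hw' => hwmax w' hw')
        _ = _ := by rw [smul_eq_mul]
    set Bw : Finset (EuclideanSpace ℝ (Fin d)) := B.filter (fun v => ⟪v, w⟫ = α) with hBw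
    -- projection
    set α' : ℝ := α / (1 + α) with hα'
    have h1a : (0:ℝ) < 1 - α ^ 2 := by nlinarith
    have h1α : (0:ℝ) < 1 + α := by linarith
    set c : ℝ := (Real.sqrt (1 - α ^ 2))⁻¹ with hc
    have hcpos : 0 < c := by
      rw [hc]; exact inv_pos.2 (Real.sqrt_pos.2 h1a)
    have hc2 : c ^ 2 = (1 - α ^ 2)⁻¹ := by
      rw [hc, inv_pow, Real.sq_sqrt h1a.le]
    set f : EuclideanSpace ℝ (Fin d) → EuclideanSpace ℝ (Fin d) :=
      fun v => c • (v - α • w) with hf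
    have hfinj : Function.Injective f := by
      intro x y hxy
      have h1 := smul_right_injective (EuclideanSpace ℝ (Fin d)) hcpos.ne' hxy
      exact sub_left_injective h1
    have hinner : ∀ x y : EuclideanSpace ℝ (Fin d), ⟪x, w⟫ = α → ⟪y, w⟫ = α →
        ⟪f x, f y⟫ = (⟪x, y⟫ - α ^ 2) / (1 - α ^ 2) := by
      intro x y hx hy
      have hwy : ⟪w, y⟫ = α := by rw [real_inner_comm]; exact hy
      have hww : ⟪w, w⟫ = (1:ℝ) := hIu w hwI
      rw [hf]
      simp only [real_inner_smul_left, real_inner_smul_right, inner_sub_left,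
        inner_sub_right, hx, hwy, hww]
      have heq : c * (c * (⟪x, y⟫ - α * α) - α * (c * (α - α * 1)))
          = c ^ 2 * (⟪x, y⟫ - α ^ 2) := by ring
      rw [heq, hc2]
      field_simp
    have hαα' : (α - α ^ 2) / (1 - α ^ 2) = α' := by
      rw [hα']
      rw [div_eq_div_iff h1a.ne' h1α.ne']
      ring
    have hedge : ∀ x : ℝ, x ≤ -β → (x - α ^ 2) / (1 - α ^ 2) ≤ -β := by
      intro x hx
      rw [div_le_iff₀ h1a]
      nlinarith
    have hmono : ∀ x : ℝ, x ≤ α → (x - α ^ 2) / (1 - α ^ 2) ≤ α' := by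
      intro x hx
      rw [← hαα']
      exact (div_le_div_iff_of_pos_right h1a).2 (by linarith)
    -- inner products with w
    have hIw : ∀ x ∈ I.erase w, ⟪x, w⟫ = α := fun x hx =>
      hII x (Finset.mem_of_mem_erase hx) w hwI (Finset.ne_of_mem_erase hx)
    have hBww : ∀ x ∈ Bw, ⟪x, w⟫ = α := fun x hx => (Finset.mem_filter.1 hx).2
    set I' : Finset (EuclideanSpace ℝ (Fin d)) := (I.erase w).image f with hI'
    set B' : Finset (EuclideanSpace ℝ (Fin d)) := Bw.image f with hB'
    have hα'0 : 0 < α' := div_pos hα0 h1α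
    have hα'1 : α' < 1 := by
      rw [hα', div_lt_one h1α]; linarith
    have hα'k : 2 / β ^ 2 ≤ (k : ℝ) + 1 / α' := by
      have : 1 / α' = 1 / α + 1 := by
        rw [hα']; field_simp
      rw [this]
      push_cast at hαk
      linarith
    have hI'u : ∀ v ∈ I', ⟪v, v⟫ = 1 := by
      rintro v hv
      obtain ⟨x, hx, rfl⟩ := Finset.mem_image.1 hv
      rw [hinner x x (hIw x hx) (hIw x hx), hIu x (Finset.mem_of_mem_erase hx)]
      field_simp
    have hB'u : ∀ v ∈ B', ⟪v, v⟫ = 1 := by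
      rintro v hv
      obtain ⟨x, hx, rfl⟩ := Finset.mem_image.1 hv
      rw [hinner x x (hBww x hx) (hBww x hx), hBu x (Finset.mem_of_mem_filter x hx)]
      field_simp
    have hI'I' : ∀ v ∈ I', ∀ w' ∈ I', v ≠ w' → ⟪v, w'⟫ = α' := by
      rintro v hv w' hw' hne
      obtain ⟨x, hx, rfl⟩ := Finset.mem_image.1 hv
      obtain ⟨y, hy, rfl⟩ := Finset.mem_image.1 hw'
      have hxy : x ≠ y := fun h => hne (by rw [h])
      rw [hinner x y (hIw x hx) (hIw y hy),
        hII x (Finset.mem_of_mem_erase hx) y (Finset.mem_of_mem_erase hy) hxy, hαα']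
    have hB'I' : ∀ v ∈ B', ∀ w' ∈ I', ⟪v, w'⟫ = α' ∨ ⟪v, w'⟫ ≤ -β := by
      rintro v hv w' hw'
      obtain ⟨x, hx, rfl⟩ := Finset.mem_image.1 hv
      obtain ⟨y, hy, rfl⟩ := Finset.mem_image.1 hw'
      rw [hinner x y (hBww x hx) (hIw y hy)]
      rcases hBI x (Finset.mem_of_mem_filter x hx) y (Finset.mem_of_mem_erase hy) with h | h
      · left; rw [h, hαα']
      · right; exact hedge _ h
    have hB'B' : ∀ v ∈ B', ∀ w' ∈ B', v ≠ w' → ⟪v, w'⟫ ≤ α' := by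
      rintro v hv w' hw' hne
      obtain ⟨x, hx, rfl⟩ := Finset.mem_image.1 hv
      obtain ⟨y, hy, rfl⟩ := Finset.mem_image.1 hw'
      have hxy : x ≠ y := fun h => hne (by rw [h])
      rw [hinner x y (hBww x hx) (hBww y hy)]
      exact hmono _ (hBB x (Finset.mem_of_mem_filter x hx) y (Finset.mem_of_mem_filter y hy) hxy)
    have hnbr' : ∀ v ∈ B', ∃ w' ∈ I', ⟪v, w'⟫ ≤ -β := by
      rintro v hv
      obtain ⟨x, hx, rfl⟩ := Finset.mem_image.1 hv
      obtain ⟨w1, hw1, hw1x⟩ := hnbr x (Finset.mem_of_mem_filter x hx)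
      have hw1w : w1 ≠ w := by
        intro h
        rw [h, hBww x hx] at hw1x
        linarith
      refine ⟨f w1, Finset.mem_image_of_mem f (Finset.mem_erase.2 ⟨hw1w, hw1⟩), ?_⟩
      rw [hinner x w1 (hBww x hx) (hII w1 hw1 w hwI hw1w)]
      exact hedge _ hw1x
    have hcount' : ∀ v ∈ B', m - 1 ≤ (I'.filter fun w' => ⟪v, w'⟫ = α').card := by
      rintro v hv
      obtain ⟨x, hx, rfl⟩ := Finset.mem_image.1 hv
      set S : Finset (EuclideanSpace ℝ (Fin d)) :=
        (I.erase w).filter (fun y => ⟪x, y⟫ = α) with hSdef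
      have hScard : m - 1 ≤ S.card := by
        have hsub2 : (I.filter fun y => ⟪x, y⟫ = α) ⊆ insert w S := by
          intro y hy
          rcases eq_or_ne y w with rfl | hyw
          · exact Finset.mem_insert_self _ _
          · exact Finset.mem_insert_of_mem (Finset.mem_filter.2
              ⟨Finset.mem_erase.2 ⟨hyw, (Finset.mem_filter.1 hy).1⟩, (Finset.mem_filter.1 hy).2⟩)
        have := (hcount x (Finset.mem_of_mem_filter x hx)).trans
          ((Finset.card_le_card hsub2).trans (Finset.card_insert_le _ _))
        omega
      have himg : S.image f ⊆ I'.filter (fun y => ⟪f x, y⟫ = α') := by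
        rintro y hy
        obtain ⟨z, hz, rfl⟩ := Finset.mem_image.1 hy
        have hz1 := (Finset.mem_filter.1 hz).1
        refine Finset.mem_filter.2 ⟨Finset.mem_image_of_mem f hz1, ?_⟩
        rw [hinner x z (hBww x hx) (hIw z hz1), (Finset.mem_filter.1 hz).2, hαα']
      calc m - 1 ≤ S.card := hScard
        _ = (S.image f).card := (Finset.card_image_of_injective S hfinj).symm
        _ ≤ _ := Finset.card_le_card himg
    have hI'card : I'.card = I.card - 1 := by
      rw [hI', Finset.card_image_of_injective _ hfinj, Finset.card_erase_of_mem hwI]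
    have hratio' : ((I'.card : ℝ)) ≤ ρ * (((m - 1 : ℕ) : ℝ) - k) := by
      have e1 : ((I'.card : ℝ)) = (I.card : ℝ) - 1 := by
        rw [hI'card]; push_cast [ht1]; ring
      have e2 : ((m - 1 : ℕ) : ℝ) = (m : ℝ) - 1 := by
        push_cast [hm1]; ring
      rw [e1, e2]
      push_cast at hratio
      linarith
    have hIH := ih α' hα'0 hα'1 hα'k I' B' (m - 1) hI'u hB'u hI'I' hB'I' hB'B' hnbr' hcount' hratio'
    have hB'card : B'.card = Bw.card := Finset.card_image_of_injective _ hfinj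
    -- conclude
    have hBwR : (Bw.card : ℝ) ≤ ρ ^ k * (2 / β ^ 2) * ((I.card : ℝ) - 1) := by
      have : ((I'.card : ℝ)) = (I.card : ℝ) - 1 := by
        rw [hI'card]; push_cast [ht1]; ring
      rw [← this, ← hB'card]
      exact_mod_cast hIH
    have hmpos : (0:ℝ) < m := by
      have : ((k:ℝ)) ≥ 0 := Nat.cast_nonneg k
      linarith
    have hkeyR : (m : ℝ) * B.card ≤ (I.card : ℝ) * Bw.card := by exact_mod_cast hkey
    have htρm : (I.card : ℝ) ≤ ρ * m := by
      push_cast at hratio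
      nlinarith [Nat.cast_nonneg (α := ℝ) k]
    have hBρBw : (B.card : ℝ) ≤ ρ * Bw.card := by
      have h1 : (m : ℝ) * B.card ≤ (ρ * m) * Bw.card :=
        hkeyR.trans (mul_le_mul_of_nonneg_right htρm (Nat.cast_nonneg _))
      have h2 : (m : ℝ) * B.card ≤ (m : ℝ) * (ρ * Bw.card) := by
        calc (m : ℝ) * B.card ≤ (ρ * m) * Bw.card := h1
          _ = (m : ℝ) * (ρ * Bw.card) := by ring
      exact le_of_mul_le_mul_left h2 hmpos
    calc (B.card : ℝ) ≤ ρ * Bw.card := hBρBw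
      _ ≤ ρ * (ρ ^ k * (2 / β ^ 2) * ((I.card : ℝ) - 1)) :=
          mul_le_mul_of_nonneg_left hBwR hρ0.le
      _ ≤ ρ ^ (k + 1) * (2 / β ^ 2) * I.card := by
          have hpow : (0:ℝ) ≤ ρ ^ k * (2 / β ^ 2) := by positivity
          have : ρ ^ k * (2 / β ^ 2) * ((I.card : ℝ) - 1) ≤ ρ ^ k * (2 / β ^ 2) * I.card :=
            mul_le_mul_of_nonneg_left (by linarith) hpow
          calc ρ * (ρ ^ k * (2 / β ^ 2) * ((I.card : ℝ) - 1))
              ≤ ρ * (ρ ^ k * (2 / β ^ 2) * I.card) := mul_le_mul_of_nonneg_left this hρ0.le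
            _ = ρ ^ (k + 1) * (2 / β ^ 2) * I.card := by ring

/-- **Lemma 7 (combinatorial lemma).** Let `0 < β ≤ 1` and `δ > 0`. There is a constant
`M = M(β,δ)` such that for every `0 < α < 1`, every dimension `d` and every
`[-1,-β] ∪ {α}`-spherical code `P` in `ℝ^d`, with the graph `G` on `P` joining `v, v'`
when `⟪v, v'⟫ ∈ [-1,-β]`: for every `U ⊆ P`, if `I` is a maximum-size independent set in
the induced subgraph `G[U]`, then some `U' ⊆ U \ I` with `|U'| ≥ |U| − M·|I|` has all of
its vertices adjacent to at least `(1−δ)·|I|` vertices of `I`. -/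
theorem independent_set_attachment (β δ : ℝ) (hβ0 : 0 < β) (hβ1 : β ≤ 1) (hδ : 0 < δ) :
    ∃ M : ℝ, ∀ α : ℝ, 0 < α → α < 1 → ∀ d : ℕ,
      ∀ P : Finset (EuclideanSpace ℝ (Fin d)),
        (∀ v ∈ P, ‖v‖ = 1) →
        (∀ v ∈ P, ∀ w ∈ P, v ≠ w → ⟪v, w⟫ ∈ Set.Icc (-1 : ℝ) (-β) ∪ {α}) →
        ∀ U ⊆ P, ∀ I ⊆ U,
          (∀ v ∈ I, ∀ w ∈ I, v ≠ w → ⟪v, w⟫ ∉ Set.Icc (-1 : ℝ) (-β)) →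
          (∀ J ⊆ U, (∀ v ∈ J, ∀ w ∈ J, v ≠ w → ⟪v, w⟫ ∉ Set.Icc (-1 : ℝ) (-β)) →
            J.card ≤ I.card) →
          ∃ U' ⊆ U \ I,
            (U.card : ℝ) - M * I.card ≤ U'.card ∧
            ∀ v ∈ U',
              (1 - δ) * I.card ≤
                ((I.filter fun w => ⟪v, w⟫ ∈ Set.Icc (-1 : ℝ) (-β)).card : ℝ) := by
  classical
  have hβ2 : (0:ℝ) < β ^ 2 := by positivity
  set K0 : ℕ := ⌈2 / β ^ 2⌉₊ with hK0
  set Kc : ℕ := ⌊1 + 1 / β⌋₊ with hKc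
  set Tn : ℕ := ⌈2 * (K0 : ℝ) / δ⌉₊ with hTn
  set M : ℝ := (2 / δ) ^ K0 * (2 / β ^ 2) + (2:ℝ) ^ (Kc + Tn) + 2 with hM
  have hMterms : (0:ℝ) ≤ (2 / δ) ^ K0 * (2 / β ^ 2) := by positivity
  have hMterms2 : (0:ℝ) < (2:ℝ) ^ (Kc + Tn) := by positivity
  refine ⟨M, ?_⟩
  intro α hα0 hα1 d P hPunit hPcode U hUP I hIU hindep hmax
  have hPu : ∀ v ∈ P, ⟪v, v⟫ = 1 := by
    intro v hv
    rw [real_inner_self_eq_norm_sq, hPunit v hv, one_pow]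
  have hαIcc : α ∉ Set.Icc (-1:ℝ) (-β) := by
    intro h
    have := h.2
    linarith
  have hcode : ∀ v ∈ P, ∀ w ∈ P, v ≠ w →
      ⟪v, w⟫ = α ∨ ⟪v, w⟫ ≤ -β := by
    intro v hv w hw hne
    rcases hPcode v hv w hw hne with h | h
    · exact Or.inr h.2
    · exact Or.inl h
  have hII : ∀ v ∈ I, ∀ w ∈ I, v ≠ w → ⟪v, w⟫ = α := by
    intro v hv w hw hne
    rcases hcode v (hUP (hIU hv)) w (hUP (hIU hw)) hne with h | h
    · exact h
    · exact absurd ⟨by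
        have := real_inner_le_norm v w
        rw [hPunit v (hUP (hIU hv)), hPunit w (hUP (hIU hw))] at this
        nlinarith [neg_abs_le (⟪v, w⟫ : ℝ), abs_real_inner_le_norm v w,
          hPunit v (hUP (hIU hv)), hPunit w (hUP (hIU hw))], h⟩
        (hindep v hv w hw hne)
  set Bad : Finset (EuclideanSpace ℝ (Fin d)) :=
    (U \ I).filter (fun v =>
      ((I.filter fun w => ⟪v, w⟫ ∈ Set.Icc (-1 : ℝ) (-β)).card : ℝ) < (1 - δ) * I.card)
    with hBadDef
  refine ⟨(U \ I) \ Bad, Finset.sdiff_subset, ?_, ?_⟩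
  swap
  · intro v hv
    have hv1 := Finset.mem_sdiff.1 hv
    have : ¬ (((I.filter fun w => ⟪v, w⟫ ∈ Set.Icc (-1 : ℝ) (-β)).card : ℝ)
        < (1 - δ) * I.card) := by
      intro hcon
      exact hv1.2 (Finset.mem_filter.2 ⟨hv1.1, hcon⟩)
    linarith [not_lt.1 this]
  -- cardinality bound
  set U' : Finset (EuclideanSpace ℝ (Fin d)) := (U \ I) \ Bad with hU'Def
  have hcard1 : U.card ≤ U'.card + Bad.card + I.card := by
    have hsub : U ⊆ (U' ∪ Bad) ∪ I := by
      intro x hx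
      by_cases hxI : x ∈ I
      · exact Finset.mem_union_right _ hxI
      · apply Finset.mem_union_left
        by_cases hxB : x ∈ Bad
        · exact Finset.mem_union_right _ hxB
        · exact Finset.mem_union_left _
            (Finset.mem_sdiff.2 ⟨Finset.mem_sdiff.2 ⟨hx, hxI⟩, hxB⟩)
    calc U.card ≤ ((U' ∪ Bad) ∪ I).card := Finset.card_le_card hsub
      _ ≤ (U' ∪ Bad).card + I.card := Finset.card_union_le _ _
      _ ≤ U'.card + Bad.card + I.card := by
          have := Finset.card_union_le U' Bad; omega
  have hcard1' : (U.card : ℝ) ≤ (U'.card : ℝ) + Bad.card + I.card := by exact_mod_cast hcard1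
  rcases Nat.eq_zero_or_pos I.card with ht0 | ht0
  · -- I empty: U empty
    have hU : U = ∅ := by
      rw [← Finset.card_eq_zero]
      by_contra h
      obtain ⟨v, hv⟩ := Finset.card_pos.1 (Nat.pos_of_ne_zero h)
      have := hmax {v} (Finset.singleton_subset_iff.2 hv) (by simp)
      rw [ht0] at this
      simp at this
    rw [hU, ht0]
    simp only [Finset.card_empty, Nat.cast_zero, mul_zero, sub_zero]
    exact Nat.cast_nonneg _
  have ht1 : (1:ℝ) ≤ I.card := by exact_mod_cast ht0
  have htnn : (0:ℝ) ≤ I.card := by linarith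
  by_cases hδ1 : 1 ≤ δ
  · -- Bad is empty
    have hBadE : Bad = ∅ := by
      rw [hBadDef]
      apply Finset.filter_false_of_mem
      intro v hv
      push_neg
      calc (1 - δ) * (I.card : ℝ) ≤ 0 := by nlinarith
        _ ≤ _ := Nat.cast_nonneg _
    rw [hBadE] at hcard1'
    simp only [Finset.card_empty, Nat.cast_zero, add_zero] at hcard1'
    have hM1 : (1:ℝ) ≤ M := by rw [hM]; nlinarith
    nlinarith
  push_neg at hδ1
  by_cases hbig : 2 * (K0 : ℝ) ≤ δ * I.card
  · -- main case: projection induction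
    set m : ℕ := ⌊δ * (I.card : ℝ)⌋₊ + 1 with hm
    have hmgt : δ * (I.card : ℝ) < m := by
      rw [hm]; push_cast; exact Nat.lt_floor_add_one _
    have hρ : (1:ℝ) ≤ 2 / δ := by
      rw [le_div_iff₀ hδ]; linarith
    have hBadU : ∀ v ∈ Bad, v ∈ U \ I := fun v hv => Finset.mem_of_mem_filter v hv
    have hBadP : ∀ v ∈ Bad, v ∈ P := fun v hv => hUP (Finset.mem_sdiff.1 (hBadU v hv)).1
    have hBadnI : ∀ v ∈ Bad, v ∉ I := fun v hv => (Finset.mem_sdiff.1 (hBadU v hv)).2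
    have hBadneq : ∀ v ∈ Bad, ∀ w ∈ I, v ≠ w := by
      intro v hv w hw h
      exact hBadnI v hv (h ▸ hw)
    have hBI : ∀ v ∈ Bad, ∀ w ∈ I, ⟪v, w⟫ = α ∨ ⟪v, w⟫ ≤ -β := by
      intro v hv w hw
      exact hcode v (hBadP v hv) w (hUP (hIU hw)) (hBadneq v hv w hw)
    have hBB : ∀ v ∈ Bad, ∀ w ∈ Bad, v ≠ w → ⟪v, w⟫ ≤ α := by
      intro v hv w hw hne
      rcases hcode v (hBadP v hv) w (hBadP w hw) hne with h | h
      · exact le_of_eq h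
      · linarith
    have hnbr : ∀ v ∈ Bad, ∃ w ∈ I, ⟪v, w⟫ ≤ -β := by
      intro v hv
      by_contra h
      push_neg at h
      have hall : ∀ w ∈ I, ⟪v, w⟫ = α := by
        intro w hw
        rcases hBI v hv w hw with h1 | h1
        · exact h1
        · exact absurd h1 (not_le.2 (h w hw))
      have hvnI := hBadnI v hv
      have hJ := hmax (insert v I)
        (Finset.insert_subset (Finset.mem_sdiff.1 (hBadU v hv)).1 hIU) ?_
      · rw [Finset.card_insert_of_notMem hvnI] at hJ; omega
      · intro x hx y hy hxy
        rcases Finset.mem_insert.1 hx with rfl | hx' <;>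
          rcases Finset.mem_insert.1 hy with rfl | hy'
        · exact absurd rfl hxy
        · rw [hall y hy']; exact hαIcc
        · rw [real_inner_comm, hall x hx']; exact hαIcc
        · exact hindep x hx' y hy' hxy
    have hcount : ∀ v ∈ Bad, m ≤ (I.filter fun w => ⟪v, w⟫ = α).card := by
      intro v hv
      have hfilt : I.filter (fun w => ⟪v, w⟫ = α)
          = I.filter (fun w => ¬ (⟪v, w⟫ ∈ Set.Icc (-1:ℝ) (-β))) := by
        apply Finset.filter_congr
        intro w hw
        constructor
        · intro h; rw [h]; exact hαIcc
        · intro h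
          rcases hBI v hv w hw with h1 | h1
          · exact h1
          · exact absurd ⟨by
              nlinarith [neg_abs_le (⟪v, w⟫ : ℝ), abs_real_inner_le_norm v w,
                hPunit v (hBadP v hv), hPunit w (hUP (hIU hw))], h1⟩ h
      have hpart := Finset.card_filter_add_card_filter_not
        (s := I) (p := fun w => ⟪v, w⟫ ∈ Set.Icc (-1:ℝ) (-β))
      have hvBadCond := (Finset.mem_filter.1 hv).2
      have hge : δ * (I.card:ℝ) <
          ((I.filter fun w => ¬ (⟪v, w⟫ ∈ Set.Icc (-1:ℝ) (-β))).card : ℝ) := by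
        have e1 : ((I.filter fun w => ¬ (⟪v, w⟫ ∈ Set.Icc (-1:ℝ) (-β))).card : ℝ)
            = (I.card : ℝ) - ((I.filter fun w => ⟪v, w⟫ ∈ Set.Icc (-1:ℝ) (-β)).card : ℝ) := by
          have : (I.filter fun w => ⟪v, w⟫ ∈ Set.Icc (-1:ℝ) (-β)).card +
              (I.filter fun w => ¬ (⟪v, w⟫ ∈ Set.Icc (-1:ℝ) (-β))).card = I.card := hpart
          push_cast [← this]; ring
        rw [e1]
        nlinarith
      rw [hfilt, hm]
      have := (Nat.floor_lt (by positivity : (0:ℝ) ≤ δ * (I.card:ℝ))).2 hge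
      omega
    have hαk : 2 / β ^ 2 ≤ (K0 : ℝ) + 1 / α := by
      have h1 : (2 / β ^ 2 : ℝ) ≤ K0 := Nat.le_ceil _
      have h2 : (0:ℝ) < 1 / α := by positivity
      linarith
    have hratio : ((I.card : ℝ)) ≤ (2 / δ) * ((m : ℝ) - K0) := by
      have h1 : (K0 : ℝ) ≤ δ * (I.card:ℝ) / 2 := by linarith
      have h2 : δ * (I.card:ℝ) / 2 ≤ (m : ℝ) - K0 := by linarith
      calc (I.card : ℝ) = (2 / δ) * (δ * (I.card:ℝ) / 2) := by field_simp
        _ ≤ (2 / δ) * ((m : ℝ) - K0) := by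
            apply mul_le_mul_of_nonneg_left (by linarith) (by positivity)
    have hBadBound := proj_induction β (2 / δ) hβ0 hρ K0 α hα0 hα1 hαk I Bad m
      (fun v hv => hPu v (hUP (hIU hv)))
      (fun v hv => hPu v (hBadP v hv))
      hII hBI hBB hnbr hcount hratio
    have hMge : (2 / δ) ^ K0 * (2 / β ^ 2) + 1 ≤ M := by
      rw [hM]; nlinarith
    have hfin : ((2 / δ) ^ K0 * (2 / β ^ 2) + 1) * (I.card:ℝ) ≤ M * I.card :=
      mul_le_mul_of_nonneg_right hMge htnn
    have hstep : (U.card : ℝ) ≤ (U'.card : ℝ) + M * I.card := by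
      calc (U.card : ℝ) ≤ (U'.card : ℝ) + Bad.card + I.card := hcard1'
        _ ≤ (U'.card : ℝ) + (2 / δ) ^ K0 * (2 / β ^ 2) * I.card + I.card := by linarith
        _ = (U'.card : ℝ) + ((2 / δ) ^ K0 * (2 / β ^ 2) + 1) * (I.card:ℝ) := by ring
        _ ≤ (U'.card : ℝ) + M * I.card := by linarith
    linarith
  · -- Ramsey case
    push_neg at hbig
    have htTn : I.card ≤ Tn := by
      have h1 : (I.card : ℝ) < 2 * (K0:ℝ) / δ := by
        rw [lt_div_iff₀ hδ]; linarith
      have h2 : (2 * (K0:ℝ) / δ) ≤ Tn := Nat.le_ceil _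
      have : (I.card : ℝ) < (Tn : ℝ) := lt_of_lt_of_le h1 h2
      exact_mod_cast this.le
    have hclq : ∀ C ⊆ U, (∀ x ∈ C, ∀ y ∈ C, x ≠ y →
        (⟪x, y⟫ ∈ Set.Icc (-1:ℝ) (-β))) → C.card ≤ Kc := by
      intro C hC hCcl
      have := clique_bound C β hβ0
        (fun v hv => hPu v (hUP (hC hv)))
        (fun v hv u hu hne => (hCcl v hv u hu hne).2)
      exact Nat.le_floor this
    have hsym : ∀ x y : EuclideanSpace ℝ (Fin d),
        (⟪x, y⟫ ∈ Set.Icc (-1:ℝ) (-β)) → (⟪y, x⟫ ∈ Set.Icc (-1:ℝ) (-β)) := by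
      intro x y h
      rwa [real_inner_comm]
    have hram := ramsey_bound (Kc + I.card) Kc I.card (le_refl _) U _ hsym hclq hmax
    have hU2 : U.card ≤ 2 ^ (Kc + Tn) := by
      have h1 : (Kc + I.card).choose Kc ≤ 2 ^ (Kc + I.card) := by
        have h := Nat.sum_range_choose (Kc + I.card)
        calc (Kc + I.card).choose Kc
            ≤ ∑ i ∈ Finset.range (Kc + I.card + 1), (Kc + I.card).choose i :=
              Finset.single_le_sum (fun i _ => Nat.zero_le _)
                (Finset.mem_range.2 (by omega))
          _ = 2 ^ (Kc + I.card) := h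
      have h2 : (2:ℕ) ^ (Kc + I.card) ≤ 2 ^ (Kc + Tn) :=
        Nat.pow_le_pow_right (by norm_num) (by omega)
      omega
    have hU2' : (U.card : ℝ) ≤ (2:ℝ) ^ (Kc + Tn) := by
      calc (U.card : ℝ) ≤ ((2 ^ (Kc + Tn) : ℕ) : ℝ) := by exact_mod_cast hU2
        _ = (2:ℝ) ^ (Kc + Tn) := by push_cast; ring
    have hMge : (2:ℝ) ^ (Kc + Tn) ≤ M := by rw [hM]; nlinarith
    have hMt : (U.card : ℝ) ≤ M * I.card := by
      calc (U.card : ℝ) ≤ M := le_trans hU2' hMge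
        _ = M * 1 := by ring
        _ ≤ M * I.card := by
            apply mul_le_mul_of_nonneg_left ht1
            nlinarith
    have : (0:ℝ) ≤ (U'.card : ℝ) := Nat.cast_nonneg _
    linarith
end

section
/- Let G be a graph, let B ≥ 1 be an integer, and let δ > 0 satisfy (B+1)B/2 · δ < 1. Let I_0, I_1, …, I_B be nonempty, pairwise disjoint finite sets of vertices of G such that for all 0 ≤ r < s ≤ B, every vertex of I_s is adjacent to at least (1 − δ)·|I_r| vertices of I_r. Then there exist vertices v_0 ∈ I_0, v_1 ∈ I_1, …, v_B ∈ I_B that are pairwise adjacent, i.e., G contains a clique of size B + 1. -/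
open scoped Classical

/-- Greedy pick: `greedy G B I k` is a vertex of `I (B - k)` adjacent to all previously
chosen `greedy G B I j` for `j < k`, when such a vertex exists. -/
noncomputable def greedy {V : Type*} [Nonempty V] (G : SimpleGraph V) (B : ℕ)
    (I : Fin (B + 1) → Finset V) : ℕ → V
  | k =>
    have prev : ∀ j, j < k → V := fun j _ => greedy G B I j
    if h : k ≤ B then
      if hS : ((I ⟨B - k, by omega⟩).filter
          (fun x => ∀ j, (hj : j < k) → G.Adj x (prev j hj))).Nonempty then
        hS.choose
      else Classical.arbitrary V
    else Classical.arbitrary V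

/-- **Clique from dense independent sets.** Let `G` be a simple graph, `B ≥ 1` an integer
and `δ > 0` with `(B+1)B/2 · δ < 1`. If `I_0, …, I_B` are nonempty pairwise disjoint
finite sets of vertices such that for all `r < s` every vertex of `I_s` is adjacent to at
least `(1−δ)·|I_r|` vertices of `I_r`, then one can pick `v_i ∈ I_i` forming a clique of
size `B + 1`. -/
theorem clique_from_dense_sets {V : Type*} (G : SimpleGraph V) (B : ℕ) (hB : 1 ≤ B)
    (δ : ℝ) (hδ : 0 < δ) (hδB : ((B + 1) * B / 2 : ℝ) * δ < 1)
    (I : Fin (B + 1) → Finset V)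
    (hne : ∀ i, (I i).Nonempty)
    (hdisj : ∀ i j, i ≠ j → Disjoint (I i) (I j))
    (hdense : ∀ r s : Fin (B + 1), r < s → ∀ v ∈ I s,
      (1 - δ) * (I r).card ≤ (((I r).filter fun w => G.Adj v w).card : ℝ)) :
    ∃ v : Fin (B + 1) → V, (∀ i, v i ∈ I i) ∧ ∀ i j, i ≠ j → G.Adj (v i) (v j) := by
  have : Nonempty V := ⟨(hne 0).choose⟩
  set g := greedy G B I with hg
  have hBδ : (B : ℝ) * δ < 1 := by
    calc (B : ℝ) * δ ≤ ((B + 1) * B / 2 : ℝ) * δ := by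
          apply mul_le_mul_of_nonneg_right _ hδ.le
          have : (1 : ℝ) ≤ B := by exact_mod_cast hB
          nlinarith
      _ < 1 := hδB
  -- main invariant
  have key : ∀ k, k ≤ B → g k ∈ (I ⟨B - k, by omega⟩).filter
      (fun x => ∀ j, (hj : j < k) → G.Adj x (g j)) := by
    intro k
    induction k using Nat.strong_induction_on with
    | _ k ih =>
      intro hk
      set r : Fin (B + 1) := ⟨B - k, by omega⟩ with hr
      set S := (I r).filter (fun x => ∀ j, (hj : j < k) → G.Adj x (g j)) with hS
      have hSne : S.Nonempty := by
        by_contra hcon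
        -- counting argument
        have hsub : I r \ S ⊆ (Finset.range k).biUnion
            (fun j => (I r).filter (fun x => ¬ G.Adj (g j) x)) := by
          intro x hx
          simp only [Finset.mem_sdiff, hS, Finset.mem_filter, not_and, not_forall] at hx
          obtain ⟨hxI, hx2⟩ := hx
          obtain ⟨j, hj, hadj⟩ := hx2 hxI
          refine Finset.mem_biUnion.2 ⟨j, Finset.mem_range.2 hj, ?_⟩
          simp only [Finset.mem_filter]
          exact ⟨hxI, fun h => hadj (h.symm)⟩
        have hcard1 : ∀ j < k, (((I r).filter (fun x => ¬ G.Adj (g j) x)).card : ℝ)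
            ≤ δ * (I r).card := by
          intro j hj
          have hjB : j ≤ B := le_trans (Nat.le_of_lt hj) hk
          have hgj : g j ∈ I ⟨B - j, by omega⟩ := by
            have := ih j hj (le_trans (Nat.le_of_lt hj) hk)
            exact (Finset.mem_filter.1 this).1
          have hrs : r < (⟨B - j, by omega⟩ : Fin (B + 1)) := by
            simp only [Fin.lt_def, hr]
            omega
          have hd := hdense r ⟨B - j, by omega⟩ hrs (g j) hgj
          have hsplit : ((I r).filter (fun x => G.Adj (g j) x)).card
              + ((I r).filter (fun x => ¬ G.Adj (g j) x)).card = (I r).card :=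
            Finset.card_filter_add_card_filter_not _
          have hflip : ((I r).filter fun w => G.Adj (g j) w).card
              = ((I r).filter (fun x => G.Adj (g j) x)).card := rfl
          have : (1 - δ) * (I r).card ≤ (((I r).filter (fun x => G.Adj (g j) x)).card : ℝ) := by
            rw [← hflip]; exact hd
          have hcast : (((I r).filter (fun x => G.Adj (g j) x)).card : ℝ)
              + (((I r).filter (fun x => ¬ G.Adj (g j) x)).card : ℝ) = ((I r).card : ℝ) := by
            exact_mod_cast hsplit
          linarith
        have hcard2 : ((I r \ S).card : ℝ) ≤ (k : ℝ) * (δ * (I r).card) := by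
          calc ((I r \ S).card : ℝ)
              ≤ (((Finset.range k).biUnion
                  (fun j => (I r).filter (fun x => ¬ G.Adj (g j) x))).card : ℝ) := by
                exact_mod_cast Finset.card_le_card hsub
            _ ≤ ∑ j ∈ Finset.range k,
                (((I r).filter (fun x => ¬ G.Adj (g j) x)).card : ℝ) := by
                exact_mod_cast Finset.card_biUnion_le
            _ ≤ ∑ j ∈ Finset.range k, δ * (I r).card := by
                apply Finset.sum_le_sum
                intro j hj
                exact hcard1 j (Finset.mem_range.1 hj)
            _ = (k : ℝ) * (δ * (I r).card) := by
                rw [Finset.sum_const, Finset.card_range, nsmul_eq_mul]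
        have hScard : S = ∅ := Finset.not_nonempty_iff_eq_empty.1 hcon
        have hSsub : S ⊆ I r := Finset.filter_subset _ _
        have hsd : (I r \ S).card = (I r).card := by rw [hScard, Finset.sdiff_empty]
        have hpos : (0 : ℝ) < (I r).card := by
          exact_mod_cast Finset.card_pos.2 (hne r)
        have hkB : (k : ℝ) * δ < 1 := by
          have : (k : ℝ) ≤ B := by exact_mod_cast hk
          nlinarith
        rw [hsd] at hcard2
        nlinarith
      have : g k = hSne.choose := by
        rw [hg, greedy, dif_pos hk]
        split
        · rfl
        · next h => exact absurd hSne h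
      rw [this]
      exact hSne.choose_spec
  -- now define v
  refine ⟨fun i => g (B - i), ?_, ?_⟩
  · intro i
    have hi : (i : ℕ) ≤ B := by omega
    have := key (B - i) (by omega)
    have h1 := (Finset.mem_filter.1 this).1
    have : (⟨B - (B - i), by omega⟩ : Fin (B + 1)) = i := by
      apply Fin.ext
      simp only []
      omega
    rwa [this] at h1
  · intro i j hij
    rcases lt_or_gt_of_ne hij with h | h
    · -- i < j, so B - j < B - i
      have := key (B - i) (by omega)
      have h2 := (Finset.mem_filter.1 this).2
      have hlt : B - (j : ℕ) < B - (i : ℕ) := by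
        have : (i : ℕ) < j := h
        omega
      show G.Adj (g (B - (i:ℕ))) (g (B - (j:ℕ)))
      exact h2 (B - j) hlt
    · have := key (B - j) (by omega)
      have h2 := (Finset.mem_filter.1 this).2
      have hlt : B - (i : ℕ) < B - (j : ℕ) := by
        have : (j : ℕ) < i := h
        omega
      show G.Adj (g (B - (i:ℕ))) (g (B - (j:ℕ)))
      exact (h2 (B - i) hlt).symm
end

section
/- Let r ≥ 2 and t ≥ 1 be integers and let 0 < τ ≤ 1. Then there exists a set of rt unit vectors in R^{(r−1)t+1} such that the inner product of any two distinct vectors in the set belongs to {−(1−τ)/(r−1+τ), τ/(r−1+τ)}. Consequently, for L = {−(1−τ)/(r−1+τ), τ/(r−1+τ)}, the maximum size N_L(d) of an L-spherical code in R^d satisfies N_L(d) ≥ (r/(r−1))·d + O(1) as d → ∞. -/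
private lemma scalars (M τ : ℝ) (hM : 1 ≤ M) (hτ0 : 0 < τ) (hτ1 : τ ≤ 1) :
    ∃ p q s α β : ℝ,
      p * p + (p * q + (q * p + M * (q * q))) = 1 ∧
      M * (s * s) = 1 ∧
      p * q + (q * p + M * (q * q)) = -(1 / M) ∧
      p * s + M * (q * s) = -(1 / M) ∧
      s * p + M * (s * q) = -(1 / M) ∧
      β ^ 2 * 1 + α ^ 2 = 1 ∧
      β ^ 2 * (-(1 / M)) + α ^ 2 = (τ - 1) / (M + τ) ∧
      α ^ 2 = τ / (M + τ) := by
  have hM0 : (0 : ℝ) < M := by linarith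
  have hMne : M ≠ 0 := hM0.ne'
  set u : ℝ := Real.sqrt M with hu
  have hu0 : 0 < u := Real.sqrt_pos.mpr hM0
  have hune : u ≠ 0 := hu0.ne'
  have hu2 : u * u = M := Real.mul_self_sqrt hM0.le
  have huM : 1 / u * (1 / u) = 1 / M := by rw [div_mul_div_comm, one_mul, hu2]
  set p : ℝ := Real.sqrt ((M + 1) / M) with hp
  have hp2 : p * p = (M + 1) / M := Real.mul_self_sqrt (by positivity)
  have hD0 : (0 : ℝ) < M + τ := by linarith
  have hDne : M + τ ≠ 0 := hD0.ne'
  obtain ⟨q, hq⟩ : ∃ q : ℝ, q = (1 / u - p) / M := ⟨_, rfl⟩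
  obtain ⟨s, hs⟩ : ∃ s : ℝ, s = -(1 / u) := ⟨_, rfl⟩
  have hpMq : p + M * q = 1 / u := by rw [hq]; field_simp; ring
  have I3 : p * q + (q * p + M * (q * q)) = -(1 / M) := by
    calc p * q + (q * p + M * (q * q))
        = (1 / u * (1 / u) - p * p) / M := by rw [hq]; field_simp; ring
      _ = (1 / M - (M + 1) / M) / M := by rw [huM, hp2]
      _ = -(1 / M) := by field_simp; ring
  refine ⟨p, q, s, Real.sqrt (τ / (M + τ)), Real.sqrt (M / (M + τ)), ?_, ?_, I3, ?_, ?_, ?_, ?_, ?_⟩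
  · rw [I3, hp2]; field_simp; ring
  · rw [hs, neg_mul_neg, huM]; field_simp
  · calc p * s + M * (q * s) = (p + M * q) * s := by ring
      _ = 1 / u * s := by rw [hpMq]
      _ = -(1 / M) := by rw [hs, mul_neg, huM]
  · calc s * p + M * (s * q) = s * (p + M * q) := by ring
      _ = s * (1 / u) := by rw [hpMq]
      _ = -(1 / M) := by rw [hs, neg_mul, huM]
  · rw [mul_one, Real.sq_sqrt (by positivity), Real.sq_sqrt (by positivity),
      ← add_div, div_self hDne]
  · rw [Real.sq_sqrt (by positivity), Real.sq_sqrt (by positivity)]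
    field_simp
    ring
  · exact Real.sq_sqrt (by positivity)

open scoped RealInnerProductSpace

private lemma sum_ite_val {m : ℕ} (j : ℕ) (x : ℝ) :
    (∑ k : Fin m, if j = (k : ℕ) then x else 0) = if j < m then x else 0 := by
  by_cases h : j < m
  · rw [if_pos h, Finset.sum_eq_single (⟨j, h⟩ : Fin m)]
    · simp
    · intro k _ hk
      rw [if_neg]
      intro hc
      exact hk (Fin.ext hc.symm)
    · simp
  · rw [if_neg h]
    apply Finset.sum_eq_zero
    intro k _
    rw [if_neg]
    have := k.isLt
    omega

private lemma sum_ite_val2 {m : ℕ} (j j' : ℕ) (x : ℝ) :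
    (∑ k : Fin m, if j = (k : ℕ) then (if j' = (k : ℕ) then x else 0) else 0)
      = if j = j' ∧ j < m then x else 0 := by
  by_cases hjj : j = j'
  · subst hjj
    have h : ∀ k : Fin m, (if j = (k : ℕ) then (if j = (k : ℕ) then x else 0) else 0)
        = if j = (k : ℕ) then x else 0 := by
      intro k; split_ifs <;> rfl
    rw [Finset.sum_congr rfl fun k _ => h k, sum_ite_val]
    simp
  · rw [if_neg (by tauto)]
    apply Finset.sum_eq_zero
    intro k _
    split_ifs with h1 h2
    · omega
    · rfl
    · rfl

private lemma main_construction (r t e n : ℕ) (hr : 2 ≤ r) (he : 1 ≤ e)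
    (hn : n = (r - 1) * t + e) (τ : ℝ) (hτ0 : 0 < τ) (hτ1 : τ ≤ 1) :
    ∃ P : Finset (EuclideanSpace ℝ (Fin n)),
      P.card = r * t ∧ (∀ v ∈ P, ‖v‖ = 1) ∧
      ∀ v ∈ P, ∀ w ∈ P, v ≠ w →
        ⟪v, w⟫ ∈ ({-(1 - τ) / ((r : ℝ) - 1 + τ), τ / ((r : ℝ) - 1 + τ)} : Set ℝ) := by
  classical
  set m : ℕ := r - 1 with hm
  have hm1 : 1 ≤ m := by omega
  set M : ℝ := (m : ℝ) with hM
  have hMr : M = (r : ℝ) - 1 := by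
    rw [hM, hm, Nat.cast_sub (by omega)]; simp
  have hM1 : (1 : ℝ) ≤ M := by rw [hM]; exact_mod_cast hm1
  have hM0 : (0 : ℝ) < M := by linarith
  have hD0 : (0 : ℝ) < M + τ := by linarith
  obtain ⟨p, q, s, α, β, I1, I2, I3, I4, I5, J1, J2, J3⟩ := scalars M τ hM1 hτ0 hτ1
  -- the simplex vectors
  set w : Fin r → Fin m → ℝ := fun j k =>
    (if (j : ℕ) = (k : ℕ) then p else 0) + (if (j : ℕ) = m then s else q) with hw
  have hwsum : ∀ j j' : Fin r,
      (∑ k : Fin m, w j k * w j' k) = if j = j' then 1 else -(1 / M) := by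
    intro j j'
    set c : Fin r → ℝ := fun j => if (j : ℕ) = m then s else q with hc
    have expand : ∀ k : Fin m, w j k * w j' k =
        (if (j : ℕ) = (k : ℕ) then (if (j' : ℕ) = (k : ℕ) then p * p else 0) else 0)
        + ((if (j : ℕ) = (k : ℕ) then p * c j' else 0)
        + ((if (j' : ℕ) = (k : ℕ) then c j * p else 0) + c j * c j')) := by
      intro k
      simp only [hw, hc]
      split_ifs <;> ring
    rw [Finset.sum_congr rfl fun k _ => expand k]
    rw [Finset.sum_add_distrib, Finset.sum_add_distrib, Finset.sum_add_distrib,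
      sum_ite_val2, sum_ite_val, sum_ite_val, Finset.sum_const, Finset.card_univ,
      Fintype.card_fin, nsmul_eq_mul, ← hM]
    have hjr : (j : ℕ) < m ∨ (j : ℕ) = m := by have := j.isLt; omega
    have hj'r : (j' : ℕ) < m ∨ (j' : ℕ) = m := by have := j'.isLt; omega
    by_cases hjj : j = j'
    · subst hjj
      rw [if_pos rfl]
      rcases hjr with h | h
      · rw [if_pos ⟨rfl, h⟩, if_pos h, if_pos h]
        simp only [hc, if_neg (by omega : ¬ (j : ℕ) = m)]
        exact I1
      · rw [if_neg (by omega), if_neg (by omega), if_neg (by omega)]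
        simp only [hc, if_pos h]
        rw [zero_add, zero_add, zero_add]
        exact I2
    · rw [if_neg hjj]
      have hjv : (j : ℕ) ≠ (j' : ℕ) := fun hc' => hjj (Fin.ext hc')
      rw [if_neg (by tauto)]
      rcases hjr with h | h <;> rcases hj'r with h' | h'
      · rw [if_pos h, if_pos h']
        simp only [hc, if_neg (by omega : ¬ (j : ℕ) = m), if_neg (by omega : ¬ (j' : ℕ) = m)]
        rw [zero_add]
        exact I3
      · rw [if_pos h, if_neg (by omega)]
        simp only [hc, if_neg (by omega : ¬ (j : ℕ) = m), if_pos h']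
        rw [zero_add, zero_add]
        exact I4
      · rw [if_neg (by omega), if_pos h']
        simp only [hc, if_pos h, if_neg (by omega : ¬ (j' : ℕ) = m)]
        rw [zero_add, zero_add]
        exact I5
      · omega
  -- the vectors
  set z : Fin e := ⟨0, he⟩ with hz
  set v : Fin t × Fin r → EuclideanSpace ℝ ((Fin t × Fin m) ⊕ Fin e) := fun x =>
    WithLp.toLp 2 (Sum.elim (fun ik : Fin t × Fin m => if x.1 = ik.1 then β * w x.2 ik.2 else 0)
      (fun b : Fin e => if b = z then α else 0) : ((Fin t × Fin m) ⊕ Fin e) → ℝ) with hv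
  have hgram : ∀ x y : Fin t × Fin r,
      ⟪v x, v y⟫ = (if x.1 = y.1 then β ^ 2 * (if x.2 = y.2 then 1 else -(1 / M)) else 0)
        + α ^ 2 := by
    intro x y
    rw [PiLp.inner_apply]
    simp only [RCLike.inner_apply, conj_trivial]
    rw [Fintype.sum_sum_type]
    congr 1
    · rw [Fintype.sum_prod_type]
      by_cases hxy : x.1 = y.1
      · rw [if_pos hxy]
        rw [Finset.sum_eq_single x.1]
        · rw [← hwsum x.2 y.2, Finset.mul_sum]
          apply Finset.sum_congr rfl
          intro k _
          simp only [hv, PiLp.toLp_apply, WithLp.ofLp_toLp, Sum.elim_inl, if_pos hxy.symm, eq_self_iff_true, if_true]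
          ring
        · intro i' _ hi'
          apply Finset.sum_eq_zero
          intro k _
          simp only [hv, PiLp.toLp_apply, WithLp.ofLp_toLp, Sum.elim_inl]
          rw [if_neg (fun hc => hi' (hc.symm.trans hxy.symm)), zero_mul]
        · simp
      · rw [if_neg hxy]
        apply Finset.sum_eq_zero
        intro i' _
        apply Finset.sum_eq_zero
        intro k _
        simp only [hv, PiLp.toLp_apply, WithLp.ofLp_toLp, Sum.elim_inl]
        split_ifs with h1 h2
        · exact absurd (h1.trans h2.symm) (Ne.symm hxy)
        all_goals ring
    · rw [Finset.sum_eq_single z]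
      · simp [hv, PiLp.toLp_apply, pow_two]
      · intro b _ hb
        simp only [hv, PiLp.toLp_apply, WithLp.ofLp_toLp, Sum.elim_inr]
        rw [if_neg hb, zero_mul]
      · simp
  have hnorm1 : ∀ x, ⟪v x, v x⟫ = 1 := by
    intro x
    rw [hgram, if_pos rfl, if_pos rfl]
    exact J1
  have hvnorm : ∀ x, ‖v x‖ = 1 := by
    intro x
    have h := hnorm1 x
    rw [real_inner_self_eq_norm_sq] at h
    nlinarith [norm_nonneg (v x)]
  have hval1 : τ / (M + τ) < 1 := by rw [div_lt_one hD0]; linarith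
  have hval2 : (τ - 1) / (M + τ) < 1 := by rw [div_lt_one hD0]; linarith
  have hgram' : ∀ x y : Fin t × Fin r, x ≠ y →
      ⟪v x, v y⟫ = if x.1 = y.1 then (τ - 1) / (M + τ) else τ / (M + τ) := by
    intro x y hxy
    rw [hgram]
    by_cases h1 : x.1 = y.1
    · have h2 : x.2 ≠ y.2 := fun hcc => hxy (Prod.ext h1 hcc)
      rw [if_pos h1, if_pos h1, if_neg h2]
      exact J2
    · rw [if_neg h1, if_neg h1, zero_add]
      exact J3
  have hvinj : Function.Injective v := by
    intro x y hxy
    by_contra hne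
    have h1 := hgram' x y hne
    rw [hxy, hnorm1 y] at h1
    split_ifs at h1 <;> linarith
  -- transfer to Fin n
  have hcard : Fintype.card ((Fin t × Fin m) ⊕ Fin e) = n := by
    rw [hn]
    simp [hm, mul_comm]
  set eI : ((Fin t × Fin m) ⊕ Fin e) ≃ Fin n := Fintype.equivFinOfCardEq hcard with heI
  set Φ := LinearIsometryEquiv.piLpCongrLeft 2 ℝ ℝ eI with hΦ
  refine ⟨Finset.image (fun x => Φ (v x)) Finset.univ, ?_, ?_, ?_⟩
  · have hinj : Function.Injective (fun x => Φ (v x)) := fun a b h => hvinj (Φ.injective h)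
    rw [Finset.card_image_of_injective _ hinj, Finset.card_univ]
    simp [mul_comm]
  · intro a ha
    obtain ⟨x, _, hx⟩ := Finset.mem_image.mp ha
    rw [← hx, Φ.norm_map, hvnorm]
  · intro a ha b hb hab
    obtain ⟨x, _, hx⟩ := Finset.mem_image.mp ha
    obtain ⟨y, _, hy⟩ := Finset.mem_image.mp hb
    have hxy : x ≠ y := by
      intro hcc; rw [hcc] at hx; rw [hx] at hy; exact hab hy
    rw [← hx, ← hy, Φ.inner_map_map, hgram' x y hxy]
    have hDr : M + τ = (r : ℝ) - 1 + τ := by rw [hMr]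
    by_cases h1 : x.1 = y.1
    · rw [if_pos h1, hDr, neg_sub]
      exact Set.mem_insert _ _
    · rw [if_neg h1, hDr]
      exact Set.mem_insert_iff.mpr (Or.inr rfl)

/-- **Lower bound construction.** For integers `r ≥ 2`, `t ≥ 1` and `0 < τ ≤ 1`, there is
a set of `rt` unit vectors in `ℝ^{(r−1)t+1}` whose pairwise inner products lie in
`{−(1−τ)/(r−1+τ), τ/(r−1+τ)}`. Consequently, for `L = {−(1−τ)/(r−1+τ), τ/(r−1+τ)}`, the
maximum size of an `L`-spherical code in `ℝ^d` is at least `(r/(r−1))·d + O(1)`. -/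
theorem spherical_code_lower_bound (r t : ℕ) (hr : 2 ≤ r) (ht : 1 ≤ t)
    (τ : ℝ) (hτ0 : 0 < τ) (hτ1 : τ ≤ 1) :
    (∃ P : Finset (EuclideanSpace ℝ (Fin ((r - 1) * t + 1))),
      P.card = r * t ∧ (∀ v ∈ P, ‖v‖ = 1) ∧
      ∀ v ∈ P, ∀ w ∈ P, v ≠ w →
        ⟪v, w⟫ ∈ ({-(1 - τ) / ((r : ℝ) - 1 + τ), τ / ((r : ℝ) - 1 + τ)} : Set ℝ)) ∧
    ∃ C : ℝ, ∀ d : ℕ, 1 ≤ d →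
      ∃ P : Finset (EuclideanSpace ℝ (Fin d)),
        (∀ v ∈ P, ‖v‖ = 1) ∧
        (∀ v ∈ P, ∀ w ∈ P, v ≠ w →
          ⟪v, w⟫ ∈ ({-(1 - τ) / ((r : ℝ) - 1 + τ), τ / ((r : ℝ) - 1 + τ)} : Set ℝ)) ∧
        ((r : ℝ) / ((r : ℝ) - 1)) * d - C ≤ P.card := by
  constructor
  · exact (main_construction r t 1 _ hr le_rfl rfl τ hτ0 hτ1).imp
      fun P h => ⟨h.1, h.2.1, h.2.2⟩
  · refine ⟨3 * r, fun d hd => ?_⟩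
    have hr1 : (0 : ℝ) < (r : ℝ) - 1 := by
      have : (2 : ℝ) ≤ r := by exact_mod_cast hr
      linarith
    by_cases hdr : d < r
    · refine ⟨∅, by simp, by simp, ?_⟩
      simp only [Finset.card_empty, Nat.cast_zero]
      have h1 : (r : ℝ) / ((r : ℝ) - 1) ≤ 2 := by
        rw [div_le_iff₀ hr1]
        have : (2 : ℝ) ≤ r := by exact_mod_cast hr
        linarith
      have h2 : (d : ℝ) ≤ r := by exact_mod_cast hdr.le
      have h3 : (0 : ℝ) ≤ d := by positivity
      nlinarith
    · push_neg at hdr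
      set T : ℕ := (d - 1) / (r - 1) with hT
      have hmod := Nat.div_add_mod (d - 1) (r - 1)
      have hmlt : (d - 1) % (r - 1) < r - 1 := Nat.mod_lt _ (by omega)
      set A : ℕ := (r - 1) * T with hA
      have hA1 : A + (d - 1) % (r - 1) = d - 1 := by rw [hA, hT]; exact hmod
      have hAle : A ≤ d - 1 := by omega
      set e : ℕ := d - A with he
      have he1 : 1 ≤ e := by omega
      have hne : d = (r - 1) * T + e := by rw [← hA]; omega
      obtain ⟨P, hPcard, hPnorm, hPgram⟩ :=
        main_construction r T e d hr he1 hne τ hτ0 hτ1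
      refine ⟨P, hPnorm, hPgram, ?_⟩
      rw [hPcard]
      have hd2 : (d : ℕ) ≤ A + (r - 1) := by omega
      have hd3 : (d : ℝ) ≤ (A : ℝ) + ((r : ℝ) - 1) := by
        have hcast : ((A + (r - 1) : ℕ) : ℝ) = (A : ℝ) + ((r : ℝ) - 1) := by
          push_cast [Nat.cast_sub (by omega : 1 ≤ r)]
          ring
        calc (d : ℝ) ≤ ((A + (r - 1) : ℕ) : ℝ) := by exact_mod_cast hd2
          _ = _ := hcast
      have hAr : (A : ℝ) = ((r : ℝ) - 1) * T := by
        rw [hA]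
        push_cast [Nat.cast_sub (by omega : 1 ≤ r)]
        ring
      have hrT : ((r * T : ℕ) : ℝ) = (r : ℝ) * T := by push_cast; ring
      rw [hrT]
      have key : (r : ℝ) / ((r : ℝ) - 1) * d ≤ (r : ℝ) * T + r := by
        rw [div_mul_eq_mul_div, div_le_iff₀ hr1]
        rw [hAr] at hd3
        have hr0 : (0 : ℝ) ≤ r := by positivity
        nlinarith
      have hr0 : (0 : ℝ) ≤ r := by positivity
      linarith
end
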